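/- Let p : X̃ → X be a connected harmonic G-cover with abelian Galois group G, defined by a dilated G-voltage assignment η, and let ρ : G → ℂ* be a nontrivial character. Then there exists a matroid M*(X̃/X, ρ) on ground set E(X) of rank g(X) − 1 + |{v ∈ V(X) : ρ(D(v)) ≠ {1}}| whose bases are characterized as follows: F ⊆ E(X) is a basis if and only if each connected component Xᵢ of X∖F is exactly one of: (1) a graph of genus one such that ρ(D(v)) = {1} for all v ∈ V(Xᵢ) and ρ(η(Xᵢ)) ≠ 1, where ρ(η(Xᵢ)) is the oriented product of ρ(η(e)) along the unique cycle of Xᵢ; (2) a tree containing a unique vertex v with ρ(D(v)) ≠ {1}. -/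

import Mathlib

set_option autoImplicit false
set_option maxHeartbeats 1000000

/-- A graph in the sense of Serre: a finite set of vertices, a finite set of
half-edges with a fixed-point-free involution, and a root map. -/
structure SerreGraph where
  V : Type
  H : Type
  fintypeV : Fintype V
  fintypeH : Fintype H
  decEqV : DecidableEq V
  decEqH : DecidableEq H
  inv : H → H
  inv_inv : ∀ h, inv (inv h) = h
  inv_ne : ∀ h, inv h ≠ h
  root : H → V

attribute [instance] SerreGraph.fintypeV SerreGraph.fintypeH SerreGraph.decEqV SerreGraph.decEqH

namespace SerreGraph

/-- Edges are orbits `{h, inv h}` of the involution. -/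
def Edge (X : SerreGraph) : Type := Quot (fun h h' : X.H => h' = X.inv h)

/-- The edge underlying a half-edge. -/
def edgeOf (X : SerreGraph) (h : X.H) : X.Edge := Quot.mk _ h

lemma edgeOf_surjective (X : SerreGraph) : Function.Surjective X.edgeOf :=
  fun e => Quot.exists_rep e

lemma edgeOf_inv (X : SerreGraph) (h : X.H) : X.edgeOf (X.inv h) = X.edgeOf h :=
  Quot.sound (X.inv_inv h).symm

instance (X : SerreGraph) : Finite X.Edge := Quot.finite _
noncomputable instance (X : SerreGraph) : Fintype X.Edge := Fintype.ofFinite _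
noncomputable instance (X : SerreGraph) : DecidableEq X.Edge := Classical.decEq _

/-- One step of adjacency in the graph obtained by deleting the edges in `F`. -/
def adjStep (X : SerreGraph) (F : Finset X.Edge) (u v : X.V) : Prop :=
  ∃ h : X.H, X.root h = u ∧ X.root (X.inv h) = v ∧ X.edgeOf h ∉ F

/-- `u` and `v` lie in the same connected component of `X ∖ F`. -/
def compRel (X : SerreGraph) (F : Finset X.Edge) (u v : X.V) : Prop :=
  Relation.ReflTransGen (X.adjStep F) u v

/-- A graph is connected if it is nonempty and any two vertices are joined by a path. -/
def Connected (X : SerreGraph) : Prop :=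
  Nonempty X.V ∧ ∀ u v : X.V, X.compRel ∅ u v

/-- The vertex set of the connected component of `v` in `X ∖ F`. -/
noncomputable def compVerts (X : SerreGraph) (F : Finset X.Edge) (v : X.V) : Finset X.V :=
  (Set.toFinite {u | X.compRel F v u}).toFinset

/-- The set of connected components (as vertex sets) of `X ∖ F`. -/
noncomputable def components (X : SerreGraph) (F : Finset X.Edge) : Finset (Finset X.V) :=
  Finset.univ.image (X.compVerts F)

/-- The edges of `X ∖ F` belonging to a component with vertex set `C`. -/
noncomputable def edgesIn (X : SerreGraph) (F : Finset X.Edge) (C : Finset X.V) :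
    Finset X.Edge :=
  (Set.toFinite {e | e ∉ F ∧ ∃ h, X.edgeOf h = e ∧ X.root h ∈ C}).toFinset

/-- A spanning tree: a spanning-connected set of edges of cardinality `|V| - 1`. -/
def IsSpanningTree (X : SerreGraph) (T : Finset X.Edge) : Prop :=
  (∀ u v : X.V, Relation.ReflTransGen
      (fun a b => ∃ h, X.root h = a ∧ X.root (X.inv h) = b ∧ X.edgeOf h ∈ T) u v) ∧
  T.card + 1 = Fintype.card X.V

noncomputable def spanningTrees (X : SerreGraph) : Finset (Finset X.Edge) :=
  (Set.toFinite {T | X.IsSpanningTree T}).toFinset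

/-- The number of spanning trees of `X`; by Kirchhoff's theorem this is `|Jac(X)|`. -/
noncomputable def numSpanningTrees (X : SerreGraph) : ℕ := X.spanningTrees.card

/-- The genus `g(X) = |E(X)| - |V(X)| + 1` of a (connected) graph. -/
noncomputable def genus (X : SerreGraph) : ℕ :=
  Fintype.card X.Edge + 1 - Fintype.card X.V

/-- The Jacobian polynomial `J_X = ∑_T ∏_{e ∉ T} x_e`, summed over spanning trees. -/
noncomputable def jacobianPoly (X : SerreGraph) (R : Type) [CommRing R] :
    MvPolynomial X.Edge R :=
  ∑ T ∈ X.spanningTrees, ∏ e ∈ Tᶜ, MvPolynomial.X e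

/-- A closed path: a nonempty list of half-edges, consecutively matched head-to-tail,
including from the last one back to the first. -/
def IsClosedPath (X : SerreGraph) (l : List X.H) : Prop :=
  l ≠ [] ∧ List.Chain' (fun a b => X.root (X.inv a) = X.root b) (l ++ l.take 1)

/-- A cycle with pairwise distinct edges, all belonging to `S`. -/
def IsEdgeCycle (X : SerreGraph) (S : Finset X.Edge) (l : List X.H) : Prop :=
  X.IsClosedPath l ∧ (∀ h ∈ l, X.edgeOf h ∈ S) ∧ (l.map X.edgeOf).Nodup

/-- An edge is a loop if its two root vertices coincide. -/
def IsLoop (X : SerreGraph) (e : X.Edge) : Prop :=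
  ∃ h, X.edgeOf h = e ∧ X.root h = X.root (X.inv h)

/-- An orientation: a choice of half-edge (source half) for every edge. -/
structure Orientation (X : SerreGraph) where
  pick : X.Edge → X.H
  pick_spec : ∀ e, X.edgeOf (pick e) = e

/-- The voltage of a half-edge: `η(e)` if it is traversed in the chosen orientation,
`η(e)⁻¹` otherwise. -/
def halfVoltage {G : Type} [Group G] (X : SerreGraph) (o : X.Orientation)
    (η : X.Edge → G) (h : X.H) : G :=
  if h = o.pick (X.edgeOf h) then η (X.edgeOf h) else (η (X.edgeOf h))⁻¹

/-- The (Frobenius) voltage of a path of half-edges. -/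
def pathVoltage {G : Type} [Group G] (X : SerreGraph) (o : X.Orientation)
    (η : X.Edge → G) (l : List X.H) : G :=
  (l.map (X.halfVoltage o η)).prod

/-- A morphism of Serre graphs. -/
structure Hom (X Y : SerreGraph) where
  vMap : X.V → Y.V
  hMap : X.H → Y.H
  hMap_inv : ∀ h, hMap (X.inv h) = Y.inv (hMap h)
  root_hMap : ∀ h, Y.root (hMap h) = vMap (X.root h)

/-- The induced map on edges. -/
def Hom.edgeMap {X Y : SerreGraph} (f : Hom X Y) : X.Edge → Y.Edge :=
  Quot.map f.hMap (fun a b hab => by rw [hab, f.hMap_inv])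

/-- A morphism is harmonic with local degree function `d` if for every vertex `v`
upstairs and every half-edge `h` rooted at its image, `d v` is the number of
half-edges at `v` mapping to `h`. -/
structure IsHarmonic {X Y : SerreGraph} (f : Hom X Y) (d : X.V → ℕ) : Prop where
  pos : ∀ v, 0 < d v
  balanced : ∀ (v : X.V) (h : Y.H), Y.root h = f.vMap v →
    d v = Nat.card {h' : X.H // X.root h' = v ∧ f.hMap h' = h}

/-- A harmonic Galois cover with Galois group `G`: a harmonic morphism of degree `|G|`
together with an equivariant `G`-action that is transitive on vertex fibers and simply
transitive on edge fibers. -/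
structure GCover (G : Type) [Group G] [Fintype G] (Xt X : SerreGraph)
    extends Hom Xt X where
  d : Xt.V → ℕ
  harm : IsHarmonic toHom d
  deg_eq : ∀ v : X.V,
    ∑ w ∈ Finset.univ.filter (fun w => toHom.vMap w = v), d w = Fintype.card G
  smulV : G → Xt.V → Xt.V
  smulH : G → Xt.H → Xt.H
  one_smulV : ∀ w, smulV 1 w = w
  mul_smulV : ∀ g g' w, smulV (g * g') w = smulV g (smulV g' w)
  one_smulH : ∀ h, smulH 1 h = h
  mul_smulH : ∀ g g' h, smulH (g * g') h = smulH g (smulH g' h)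
  smulH_inv : ∀ g h, smulH g (Xt.inv h) = Xt.inv (smulH g h)
  root_smulH : ∀ g h, Xt.root (smulH g h) = smulV g (Xt.root h)
  vMap_smulV : ∀ g w, toHom.vMap (smulV g w) = toHom.vMap w
  hMap_smulH : ∀ g h, toHom.hMap (smulH g h) = toHom.hMap h
  d_smulV : ∀ g w, d (smulV g w) = d w
  vertex_trans : ∀ w w' : Xt.V, toHom.vMap w = toHom.vMap w' → ∃ g, smulV g w = w'
  edge_trans : ∀ ht ht' : Xt.H,
    (toHom.hMap ht' = toHom.hMap ht ∨ toHom.hMap ht' = X.inv (toHom.hMap ht)) →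
    ∃ g, smulH g ht = ht' ∨ smulH g ht = Xt.inv ht'
  edge_free : ∀ (g : G) (ht : Xt.H),
    (smulH g ht = ht ∨ smulH g ht = Xt.inv ht) → g = 1

namespace GCover

variable {G : Type} [Group G] [Fintype G] {Xt X : SerreGraph}

/-- The cover is free if all local degrees are one. -/
def IsFree (c : GCover G Xt X) : Prop := ∀ w, c.d w = 1

/-- The dilation subgroup of a vertex: the common stabilizer of the vertices in its fiber. -/
def dilation (c : GCover G Xt X) (v : X.V) : Set G :=
  {g | ∀ w : Xt.V, c.vMap w = v → c.smulV g w = w}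

/-- One step of adjacency upstairs, through half-edges lying over `X ∖ F`. -/
def liftStep (c : GCover G Xt X) (F : Finset X.Edge) (a b : Xt.V) : Prop :=
  ∃ ht : Xt.H, Xt.root ht = a ∧ Xt.root (Xt.inv ht) = b ∧ X.edgeOf (c.hMap ht) ∉ F

/-- The number of connected components of the preimage of the component of `v` in `X ∖ F`. -/
noncomputable def numLiftComponents (c : GCover G Xt X) (F : Finset X.Edge) (v : X.V) : ℕ :=
  Nat.card (Quot (fun a b : {w : Xt.V // X.compRel F v (c.vMap w)} => c.liftStep F a.1 b.1))

/-- The connected component of `v` in `X ∖ F` is `G`-nontrivial, i.e. the restriction of the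
cover over it is not isomorphic to the trivial `G`-cover (equivalently, its preimage does
not have exactly `|G|` connected components). -/
def GNontrivialAt (c : GCover G Xt X) (F : Finset X.Edge) (v : X.V) : Prop :=
  c.numLiftComponents F v ≠ Fintype.card G

/-- Independent sets of the matroid `M*(X̃/X)`. -/
def Indep (c : GCover G Xt X) (F : Finset X.Edge) : Prop :=
  ∀ v : X.V, c.GNontrivialAt F v

/-- Bases of the matroid `M*(X̃/X)`: maximal independent sets. -/
def IsBasisD (c : GCover G Xt X) (F : Finset X.Edge) : Prop :=
  c.Indep F ∧ ∀ F' : Finset X.Edge, F ⊆ F' → c.Indep F' → F' = F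

/-- The dilated `G`-voltage assignment `η` (together with a section `σ` of the vertex map)
represents the cover: for each edge `e`, some lift of `e` runs from `σ(s(e))` to
`η(e) • σ(t(e))`. -/
structure IsVoltageRep (c : GCover G Xt X) (o : X.Orientation) (σ : X.V → Xt.V)
    (η : X.Edge → G) : Prop where
  sec : ∀ v, c.vMap (σ v) = v
  lift : ∀ e : X.Edge, ∃ ht : Xt.H, c.hMap ht = o.pick e ∧
    Xt.root ht = σ (X.root (o.pick e)) ∧
    Xt.root (Xt.inv ht) = c.smulV (η e) (σ (X.root (X.inv (o.pick e))))

/-- The component of `v` in `X ∖ F` is nontrivial for the cover twisted by the character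
`ρ`: it contains a vertex whose dilation group has nontrivial image under `ρ`, or a closed
path whose voltage has nontrivial image under `ρ`. -/
def RhoNontrivialAt (c : GCover G Xt X) (o : X.Orientation) (η : X.Edge → G)
    (ρ : G →* ℂ) (F : Finset X.Edge) (v : X.V) : Prop :=
  (∃ u : X.V, X.compRel F v u ∧ ∃ g ∈ c.dilation u, ρ g ≠ 1) ∨
  (∃ l : List X.H, X.IsClosedPath l ∧
    (∀ h ∈ l, X.edgeOf h ∉ F ∧ X.compRel F v (X.root h)) ∧
    ρ (X.pathVoltage o η l) ≠ 1)

/-- Bases of the `ρ`-twisted matroid `M*(X̃/X, ρ)`: maximal subsets `F` such that every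
connected component of `X ∖ F` is `ρ`-nontrivial. -/
def IsBasisRho (c : GCover G Xt X) (o : X.Orientation) (η : X.Edge → G)
    (ρ : G →* ℂ) (F : Finset X.Edge) : Prop :=
  (∀ v : X.V, c.RhoNontrivialAt o η ρ F v) ∧
  ∀ F' : Finset X.Edge, F ⊆ F' → (∀ v : X.V, c.RhoNontrivialAt o η ρ F' v) → F' = F

end GCover

/-- The weight of a connected component with edge set `S`: `|1 - ρ(η(C))|²` where `η(C)` is
the voltage of its unique cycle, if it has one, and `1` otherwise (tree components). -/
noncomputable def cycleWeight {G : Type} [Group G] (X : SerreGraph) (o : X.Orientation)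
    (η : X.Edge → G) (ρ : G →* ℂ) (S : Finset X.Edge) : ℝ := by
  classical exact
  if hc : ∃ l, X.IsEdgeCycle S l then
    ‖(1 : ℂ) - ρ (X.pathVoltage o η hc.choose)‖ ^ 2
  else 1

/-- The weight `w_ρ(F)`: the product of the weights of the connected components of `X ∖ F`. -/
noncomputable def basisWeight {G : Type} [Group G] (X : SerreGraph) (o : X.Orientation)
    (η : X.Edge → G) (ρ : G →* ℂ) (F : Finset X.Edge) : ℝ :=
  ∏ C ∈ X.components F, cycleWeight X o η ρ (X.edgesIn F C)

/-- The weight `w(M*(X̃/X, ρ))` of the `ρ`-twisted matroid: the sum of the weights of its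
bases. -/
noncomputable def GCover.twistedWeight {G : Type} [Group G] [Fintype G] {Xt X : SerreGraph}
    (c : GCover G Xt X) (o : X.Orientation) (η : X.Edge → G) (ρ : G →* ℂ) : ℝ :=
  ∑ F ∈ (Set.toFinite {F : Finset X.Edge | c.IsBasisRho o η ρ F}).toFinset,
    basisWeight X o η ρ F

/-- The weight polynomial `P_{X̃/X,ρ} = ∑_F w_ρ(F) ∏_{e ∈ F} x_e` of the `ρ`-twisted
matroid, summed over its bases. -/
noncomputable def GCover.twistedWeightPoly {G : Type} [Group G] [Fintype G]
    {Xt X : SerreGraph} (c : GCover G Xt X) (o : X.Orientation) (η : X.Edge → G)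
    (ρ : G →* ℂ) : MvPolynomial X.Edge ℝ :=
  ∑ F ∈ (Set.toFinite {F : Finset X.Edge | c.IsBasisRho o η ρ F}).toFinset,
    MvPolynomial.C (basisWeight X o η ρ F) * ∏ e ∈ F, MvPolynomial.X e

end SerreGraph
namespace SerreGraph

/-- One contraction step: `a` and `b` are joined by an edge belonging to `F`. -/
def contractStep (X : SerreGraph) (F : Finset X.Edge) (a b : X.V) : Prop :=
  ∃ h, X.edgeOf h ∈ F ∧ X.root h = a ∧ X.root (X.inv h) = b

/-- Data exhibiting `Xc` as the contraction of `X` along the edge set `F`: the vertices of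
`Xc` are the connected components of the subgraph spanned by `F`, and the half-edges of `Xc`
are the half-edges of `X` not lying on `F`. -/
structure ContractionData (X Xc : SerreGraph) (F : Finset X.Edge) where
  vMap : X.V → Xc.V
  hMap : (h : X.H) → X.edgeOf h ∉ F → Xc.H
  hMap_injective : ∀ h₁ hh₁ h₂ hh₂, hMap h₁ hh₁ = hMap h₂ hh₂ → h₁ = h₂
  hMap_surjective : ∀ k : Xc.H, ∃ h hh, hMap h hh = k
  hMap_inv : ∀ h hh hh', hMap (X.inv h) hh' = Xc.inv (hMap h hh)
  root_hMap : ∀ h hh, Xc.root (hMap h hh) = vMap (X.root h)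
  vMap_surjective : Function.Surjective vMap
  vMap_eq_iff : ∀ u v, vMap u = vMap v ↔ Relation.ReflTransGen (X.contractStep F) u v

/-- The valency of a vertex (loops counted twice). -/
noncomputable def valency (X : SerreGraph) (v : X.V) : ℕ :=
  Nat.card {h : X.H // X.root h = v}

/-- The Laplacian matrix `L = Q - A` of a graph. -/
noncomputable def lapl (X : SerreGraph) : Matrix X.V X.V ℤ :=
  Matrix.of fun u v =>
    (if u = v then (X.valency u : ℤ) else 0) -
      (Nat.card {h : X.H // X.root h = u ∧ X.root (X.inv h) = v} : ℤ)

/-- The Laplacian as a homomorphism on divisors. -/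
noncomputable def laplHom (X : SerreGraph) : (X.V → ℤ) →+ (X.V → ℤ) where
  toFun := fun D u => ∑ v, X.lapl u v * D v
  map_zero' := by funext u; simp
  map_add' := by
    intro a b; funext u
    simp [mul_add, Finset.sum_add_distrib]

/-- Divisors of total degree zero. -/
noncomputable def div0 (X : SerreGraph) : AddSubgroup (X.V → ℤ) where
  carrier := {D | ∑ v, D v = 0}
  add_mem' := by
    intro a b ha hb
    simp only [Set.mem_setOf_eq, Pi.add_apply] at *
    simp [Finset.sum_add_distrib, ha, hb]
  zero_mem' := by simp
  neg_mem' := by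
    intro a ha
    simp only [Set.mem_setOf_eq, Pi.neg_apply] at *
    simp [ha]

/-- The subgroup of principal divisors: the image of the Laplacian. -/
noncomputable def principal (X : SerreGraph) : AddSubgroup (X.V → ℤ) :=
  (laplHom X).range

/-- The Jacobian (critical) group `Jac(X) = Div₀(X) / Im L`. -/
noncomputable def jac (X : SerreGraph) : Type :=
  X.div0 ⧸ ((X.principal).addSubgroupOf X.div0)

noncomputable instance (X : SerreGraph) : AddCommGroup X.jac :=
  inferInstanceAs (AddCommGroup (X.div0 ⧸ ((X.principal).addSubgroupOf X.div0)))

/-- The pushforward of divisors along a graph morphism. -/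
noncomputable def pushforward {Xt X : SerreGraph} (f : Hom Xt X) (D : Xt.V → ℤ) :
    X.V → ℤ :=
  fun v => ∑ w ∈ Finset.univ.filter (fun w => f.vMap w = v), D w

/-- The diagonal valency matrix `Q` (over `ℂ`). -/
noncomputable def qMatrix (X : SerreGraph) : Matrix X.V X.V ℂ :=
  Matrix.of fun u v => if u = v then (X.valency u : ℂ) else 0

/-- The `ρ`-twisted adjacency matrix `A_ρ`. -/
noncomputable def twistedAdj {G : Type} [Group G] (X : SerreGraph) (o : X.Orientation)
    (η : X.Edge → G) (ρ : G →* ℂ) : Matrix X.V X.V ℂ :=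
  Matrix.of fun u v =>
    (∑ e ∈ Finset.univ.filter
        (fun e => X.root (o.pick e) = u ∧ X.root (X.inv (o.pick e)) = v), ρ (η e)) +
    (∑ e ∈ Finset.univ.filter
        (fun e => X.root (o.pick e) = v ∧ X.root (X.inv (o.pick e)) = u),
          (starRingEnd ℂ) (ρ (η e)))

/-- The `ρ`-twisted Laplacian `L_ρ = Q - A_ρ`. -/
noncomputable def twistedLapl {G : Type} [Group G] (X : SerreGraph) (o : X.Orientation)
    (η : X.Edge → G) (ρ : G →* ℂ) : Matrix X.V X.V ℂ :=
  X.qMatrix - X.twistedAdj o η ρ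

/-- The reciprocal `ζ_M(s, x_e, X)⁻¹ = det(I - W)` of the metric zeta function, where `W`
is the edge matrix with entries `s^{x_e}` (two-term determinant formula). -/
noncomputable def zetaMInv (X : SerreGraph) (x : X.Edge → ℝ) (s : ℝ) : ℝ :=
  Matrix.det ((1 : Matrix X.H X.H ℝ) - Matrix.of fun a b : X.H =>
    if X.root (X.inv a) = X.root b ∧ b ≠ X.inv a then s ^ (x (X.edgeOf a)) else 0)

/-- The reciprocal of the Ihara zeta function: the metric zeta with all lengths one. -/
noncomputable def zetaInv (X : SerreGraph) (s : ℝ) : ℝ :=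
  X.zetaMInv (fun _ => 1) s

/-- The reciprocal `L_M(s, x_e, X̃/X, ρ)⁻¹ = det(I - W_ρ)` of the metric Artin `L`-function
of the cover defined by the voltage assignment `η` (two-term determinant formula). -/
noncomputable def LMInv {G : Type} [Group G] (X : SerreGraph) (o : X.Orientation)
    (η : X.Edge → G) (ρ : G →* ℂ) (x : X.Edge → ℝ) (s : ℝ) : ℂ :=
  Matrix.det ((1 : Matrix X.H X.H ℂ) - Matrix.of fun a b : X.H =>
    if X.root (X.inv a) = X.root b ∧ b ≠ X.inv a then
      ρ (X.halfVoltage o η a) * ((s ^ (x (X.edgeOf a)) : ℝ) : ℂ)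
    else 0)

/-- The weight polynomial of a free cover defined by the voltage assignment `η`, twisted by
`ρ`: the sum over all `(g-1)`-element edge sets `F` all of whose complementary components
have genus one of `∏ᵢ |1 - ρ(η(Xᵢ))|² ∏_{e ∈ F} x_e`. -/
noncomputable def freeWeightPoly {G : Type} [Group G] (X : SerreGraph)
    (o : X.Orientation) (η : X.Edge → G) (ρ : G →* ℂ) : MvPolynomial X.Edge ℝ :=
  ∑ F ∈ (Set.toFinite {F : Finset X.Edge |
      F.card + Fintype.card X.V = Fintype.card X.Edge ∧
      ∀ C ∈ X.components F, (X.edgesIn F C).card = C.card}).toFinset,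
    MvPolynomial.C (basisWeight X o η ρ F) * ∏ e ∈ F, MvPolynomial.X e

/-- The `j`-th vertex on the chain subdividing the edge `e` into `n e` parts. -/
noncomputable def subVertex (X : SerreGraph) (o : X.Orientation) (n : X.Edge → ℕ)
    (e : X.Edge) (j : ℕ) : X.V ⊕ ((e : X.Edge) × Fin (n e - 1)) :=
  if _h0 : j = 0 then Sum.inl (X.root (o.pick e))
  else if h : j < n e then Sum.inr ⟨e, ⟨j - 1, by omega⟩⟩
  else Sum.inl (X.root (X.inv (o.pick e)))

/-- The graph obtained from `X` by replacing each edge `e` by a chain of `n e` edges. -/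
noncomputable def subdivide (X : SerreGraph) (o : X.Orientation) (n : X.Edge → ℕ) :
    SerreGraph where
  V := X.V ⊕ ((e : X.Edge) × Fin (n e - 1))
  H := (e : X.Edge) × (Fin (n e) × Bool)
  fintypeV := inferInstance
  fintypeH := inferInstance
  decEqV := Classical.decEq _
  decEqH := Classical.decEq _
  inv := fun p => ⟨p.1, (p.2.1, !p.2.2)⟩
  inv_inv := by rintro ⟨e, i, b⟩; simp
  inv_ne := by rintro ⟨e, i, b⟩ hcon; simp at hcon
  root := fun p => X.subVertex o n p.1 (if p.2.2 then (p.2.1 : ℕ) + 1 else (p.2.1 : ℕ))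

end SerreGraph

/-- The cycle graph with `k` vertices, every pair of cyclically adjacent vertices joined by
`M` parallel edges. -/
def cycleGraph (k M : ℕ) : SerreGraph where
  V := Fin k
  H := Fin k × Fin M × Bool
  fintypeV := inferInstance
  fintypeH := inferInstance
  decEqV := inferInstance
  decEqH := inferInstance
  inv := fun p => (p.1, p.2.1, !p.2.2)
  inv_inv := by rintro ⟨i, j, b⟩; simp
  inv_ne := by rintro ⟨i, j, b⟩ hcon; simp at hcon
  root := fun p => if p.2.2 then finRotate k p.1 else p.1

namespace SerreGraph

open Submodule Module

section Basics

variable (X : SerreGraph)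

lemma edge_eq_or {h h' : X.H} (he : X.edgeOf h = X.edgeOf h') :
    h' = h ∨ h' = X.inv h := by
  have hresp : ∀ a b : X.H, b = X.inv a → ({a, X.inv a} : Finset X.H) = {b, X.inv b} := by
    intro a b hb
    subst hb
    rw [X.inv_inv a, Finset.pair_comm]
  let f : X.Edge → Finset X.H := Quot.lift (fun a => ({a, X.inv a} : Finset X.H)) hresp
  have h1 : f (X.edgeOf h) = {h, X.inv h} := rfl
  have h2 : f (X.edgeOf h') = {h', X.inv h'} := rfl
  have : h' ∈ ({h, X.inv h} : Finset X.H) := by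
    rw [← h1, he, h2]
    simp
  simpa using this

lemma pick_eq_or (o : X.Orientation) (h : X.H) :
    o.pick (X.edgeOf h) = h ∨ o.pick (X.edgeOf h) = X.inv h :=
  X.edge_eq_or (by rw [o.pick_spec])

lemma halfVoltage_inv {G : Type} [Group G] (o : X.Orientation) (η : X.Edge → G) (h : X.H) :
    X.halfVoltage o η (X.inv h) = (X.halfVoltage o η h)⁻¹ := by
  rcases X.pick_eq_or o h with hp | hp
  · have h1 : X.halfVoltage o η h = η (X.edgeOf h) := by
      rw [halfVoltage, if_pos hp.symm]
    have h2 : X.halfVoltage o η (X.inv h) = (η (X.edgeOf h))⁻¹ := by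
      rw [halfVoltage, X.edgeOf_inv, if_neg]
      rw [hp]
      intro hc
      exact X.inv_ne h hc
    rw [h1, h2]
  · have h1 : X.halfVoltage o η h = (η (X.edgeOf h))⁻¹ := by
      rw [halfVoltage, if_neg]
      rw [hp]
      intro hc
      exact X.inv_ne h (by rw [← hc])
    have h2 : X.halfVoltage o η (X.inv h) = η (X.edgeOf h) := by
      rw [halfVoltage, X.edgeOf_inv, if_pos hp.symm]
    rw [h1, h2, _root_.inv_inv]


lemma adjStep_symm {F : Finset X.Edge} {u v : X.V} (h : X.adjStep F u v) :
    X.adjStep F v u := by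
  obtain ⟨k, hk1, hk2, hk3⟩ := h
  exact ⟨X.inv k, hk2, by rw [X.inv_inv]; exact hk1, by rw [X.edgeOf_inv]; exact hk3⟩

lemma compRel_refl (F : Finset X.Edge) (v : X.V) : X.compRel F v v :=
  Relation.ReflTransGen.refl

lemma compRel_trans {F : Finset X.Edge} {u v w : X.V}
    (h1 : X.compRel F u v) (h2 : X.compRel F v w) : X.compRel F u w :=
  Relation.ReflTransGen.trans h1 h2

lemma compRel_symm {F : Finset X.Edge} {u v : X.V} (h : X.compRel F u v) :
    X.compRel F v u := by
  induction h with
  | refl => exact Relation.ReflTransGen.refl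
  | tail _ hstep ih =>
      exact Relation.ReflTransGen.trans
        (Relation.ReflTransGen.single (X.adjStep_symm hstep)) ih

lemma mem_compVerts {F : Finset X.Edge} {u v : X.V} :
    u ∈ X.compVerts F v ↔ X.compRel F v u := by
  simp [compVerts]

lemma self_mem_compVerts (F : Finset X.Edge) (v : X.V) : v ∈ X.compVerts F v :=
  X.mem_compVerts.2 (X.compRel_refl F v)

lemma compVerts_eq {F : Finset X.Edge} {u v : X.V} (h : X.compRel F u v) :
    X.compVerts F u = X.compVerts F v := by
  ext w
  rw [X.mem_compVerts, X.mem_compVerts]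
  constructor
  · intro hw
    exact X.compRel_trans (X.compRel_symm h) hw
  · intro hw
    exact X.compRel_trans h hw

lemma mem_components {F : Finset X.Edge} {C : Finset X.V} :
    C ∈ X.components F ↔ ∃ v, X.compVerts F v = C := by
  simp [components, eq_comm]

lemma compVerts_eq_of_mem {F : Finset X.Edge} {v u : X.V}
    (h : u ∈ X.compVerts F v) : X.compVerts F u = X.compVerts F v :=
  (X.compVerts_eq (X.mem_compVerts.1 h)).symm

lemma components_disjoint {F : Finset X.Edge} {C C' : Finset X.V}
    (hC : C ∈ X.components F) (hC' : C' ∈ X.components F) (hne : C ≠ C') :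
    Disjoint C C' := by
  obtain ⟨v, rfl⟩ := X.mem_components.1 hC
  obtain ⟨v', rfl⟩ := X.mem_components.1 hC'
  rw [Finset.disjoint_left]
  intro a ha ha'
  exact hne ((X.compVerts_eq_of_mem ha).symm.trans (X.compVerts_eq_of_mem ha'))

lemma exists_mem_components (F : Finset X.Edge) (v : X.V) :
    ∃ C ∈ X.components F, v ∈ C :=
  ⟨X.compVerts F v, X.mem_components.2 ⟨v, rfl⟩, X.self_mem_compVerts F v⟩

lemma components_nonempty {F : Finset X.Edge} {C : Finset X.V}
    (hC : C ∈ X.components F) : C.Nonempty := by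
  obtain ⟨v, rfl⟩ := X.mem_components.1 hC
  exact ⟨v, X.self_mem_compVerts F v⟩

lemma mem_edgesIn {F : Finset X.Edge} {C : Finset X.V} {e : X.Edge} :
    e ∈ X.edgesIn F C ↔ e ∉ F ∧ ∃ h, X.edgeOf h = e ∧ X.root h ∈ C := by
  simp [edgesIn]

lemma root_mem_of_edgesIn {F : Finset X.Edge} {C : Finset X.V}
    (hC : C ∈ X.components F) {e : X.Edge} (he : e ∈ X.edgesIn F C)
    {h : X.H} (hh : X.edgeOf h = e) : X.root h ∈ C := by
  obtain ⟨v, rfl⟩ := X.mem_components.1 hC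
  obtain ⟨hF, h', hh', hr'⟩ := X.mem_edgesIn.1 he
  have hstep : X.adjStep F (X.root h') (X.root (X.inv h')) :=
    ⟨h', rfl, rfl, by rw [hh']; exact hF⟩
  have hrel : X.compRel F v (X.root h') := X.mem_compVerts.1 hr'
  have hrelinv : X.compRel F v (X.root (X.inv h')) :=
    X.compRel_trans hrel (Relation.ReflTransGen.single hstep)
  have : X.edgeOf h = X.edgeOf h' := by rw [hh, hh']
  rcases X.edge_eq_or this.symm with hcase | hcase
  · rw [hcase]; exact X.mem_compVerts.2 hrel
  · rw [hcase]; exact X.mem_compVerts.2 hrelinv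

lemma mem_edgesIn_comp {F : Finset X.Edge} {e : X.Edge} (hF : e ∉ F)
    {h : X.H} (hh : X.edgeOf h = e) :
    e ∈ X.edgesIn F (X.compVerts F (X.root h)) :=
  X.mem_edgesIn.2 ⟨hF, h, hh, X.self_mem_compVerts F (X.root h)⟩

lemma edgesIn_disjoint {F : Finset X.Edge} {C C' : Finset X.V}
    (hC : C ∈ X.components F) (hC' : C' ∈ X.components F) (hne : C ≠ C') :
    Disjoint (X.edgesIn F C) (X.edgesIn F C') := by
  rw [Finset.disjoint_left]
  intro e he he'
  obtain ⟨h, hh⟩ := X.edgeOf_surjective e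
  have h1 := X.root_mem_of_edgesIn hC he hh
  have h2 := X.root_mem_of_edgesIn hC' he' hh
  exact (Finset.disjoint_left.1 (X.components_disjoint hC hC' hne)) h1 h2

lemma edgesIn_subset_compl {F : Finset X.Edge} {C : Finset X.V} :
    X.edgesIn F C ⊆ Fᶜ := by
  intro e he
  rw [Finset.mem_compl]
  exact (X.mem_edgesIn.1 he).1

end Basics

end SerreGraph

namespace SerreGraph

open scoped Classical

section Partition

variable (X : SerreGraph)

lemma univ_eq_biUnion_components (F : Finset X.Edge) :
    (Finset.univ : Finset X.V) = (X.components F).biUnion (fun C => C) := by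
  ext v
  simp only [Finset.mem_univ, Finset.mem_biUnion, true_iff]
  obtain ⟨C, hC, hv⟩ := X.exists_mem_components F v
  exact ⟨C, hC, hv⟩

lemma sum_card_components (F : Finset X.Edge) :
    ∑ C ∈ X.components F, C.card = Fintype.card X.V := by
  rw [← Finset.card_univ, X.univ_eq_biUnion_components F,
    Finset.card_biUnion (fun C hC C' hC' hne => X.components_disjoint hC hC' hne)]

lemma compl_eq_biUnion_edgesIn (F : Finset X.Edge) :
    Fᶜ = (X.components F).biUnion (fun C => X.edgesIn F C) := by
  ext e
  simp only [Finset.mem_compl, Finset.mem_biUnion]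
  constructor
  · intro he
    obtain ⟨h, hh⟩ := X.edgeOf_surjective e
    exact ⟨X.compVerts F (X.root h), X.mem_components.2 ⟨X.root h, rfl⟩,
      X.mem_edgesIn_comp he hh⟩
  · rintro ⟨C, _, he⟩
    exact (X.mem_edgesIn.1 he).1

lemma sum_card_edgesIn (F : Finset X.Edge) :
    ∑ C ∈ X.components F, (X.edgesIn F C).card = Fᶜ.card := by
  rw [X.compl_eq_biUnion_edgesIn F,
    Finset.card_biUnion (fun C hC C' hC' hne => X.edgesIn_disjoint hC hC' hne)]

lemma sum_card_inter (F : Finset X.Edge) (A : Finset X.V) :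
    ∑ C ∈ X.components F, (C ∩ A).card = A.card := by
  have hA : A = (X.components F).biUnion (fun C => C ∩ A) := by
    ext v
    simp only [Finset.mem_biUnion, Finset.mem_inter]
    constructor
    · intro hv
      obtain ⟨C, hC, hvC⟩ := X.exists_mem_components F v
      exact ⟨C, hC, hvC, hv⟩
    · rintro ⟨C, _, _, hv⟩
      exact hv
  conv_rhs => rw [hA]
  rw [Finset.card_biUnion (fun C hC C' hC' hne =>
    Finset.disjoint_of_subset_left Finset.inter_subset_left
      (Finset.disjoint_of_subset_right Finset.inter_subset_left
        (X.components_disjoint hC hC' hne)))]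

end Partition

section WalkDef

variable (X : SerreGraph)

/-- A walk from `a` to `b` along a list of half-edges. -/
inductive Walk : X.V → X.V → List X.H → Prop
  | nil (v : X.V) : Walk v v []
  | cons (h : X.H) {b : X.V} {l : List X.H} :
      Walk (X.root (X.inv h)) b l → Walk (X.root h) b (h :: l)

variable {X}

lemma Walk.append {a b c : X.V} {l l' : List X.H}
    (h1 : X.Walk a b l) (h2 : X.Walk b c l') : X.Walk a c (l ++ l') := by
  induction h1 with
  | nil v => exact h2
  | cons h _ ih => exact Walk.cons h (ih h2)

lemma walk_single {h : X.H} : X.Walk (X.root h) (X.root (X.inv h)) [h] :=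
  Walk.cons h (Walk.nil _)

lemma walk_of_compRel {F : Finset X.Edge} {u v : X.V} (h : X.compRel F u v) :
    ∃ l, X.Walk u v l ∧ ∀ k ∈ l, X.edgeOf k ∉ F := by
  induction h with
  | refl => exact ⟨[], Walk.nil u, by simp⟩
  | tail _ hstep ih =>
      obtain ⟨l, hw, hl⟩ := ih
      obtain ⟨k, hk1, hk2, hk3⟩ := hstep
      refine ⟨l ++ [k], ?_, ?_⟩
      · refine hw.append ?_
        rw [← hk1, ← hk2]
        exact walk_single
      · intro k' hk'
        rcases List.mem_append.1 hk' with hmem | hmem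
        · exact hl k' hmem
        · rw [List.mem_singleton.1 hmem]
          exact hk3

lemma Walk.compRel_of {F : Finset X.Edge} {u v : X.V} {l : List X.H}
    (hw : X.Walk u v l) (hl : ∀ k ∈ l, X.edgeOf k ∉ F) : X.compRel F u v := by
  induction hw with
  | nil v => exact X.compRel_refl F v
  | cons h hw ih =>
      refine Relation.ReflTransGen.head ⟨h, rfl, rfl, hl h (by simp)⟩ ?_
      exact ih (fun k hk => hl k (by simp [hk]))

lemma Walk.rev {u v : X.V} {l : List X.H} (hw : X.Walk u v l) :
    X.Walk v u (l.reverse.map X.inv) := by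
  induction hw with
  | nil v => exact Walk.nil v
  | cons h hw ih =>
      simp only [List.reverse_cons, List.map_append, List.map_cons, List.map_nil]
      refine ih.append ?_
      have := walk_single (X := X) (h := X.inv h)
      rwa [X.inv_inv] at this

lemma Walk.root_mem {F : Finset X.Edge} {u v : X.V} {l : List X.H}
    (hw : X.Walk u v l) (hl : ∀ k ∈ l, X.edgeOf k ∉ F) {h : X.H} (hh : h ∈ l) :
    X.compRel F u (X.root h) := by
  induction hw with
  | nil v => simp at hh
  | cons h' hw ih =>
      rcases List.mem_cons.1 hh with rfl | hmem
      · exact X.compRel_refl F _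
      · refine Relation.ReflTransGen.head ⟨h', rfl, rfl, hl h' (by simp)⟩ ?_
        exact ih (fun k hk => hl k (by simp [hk])) hmem

lemma Walk.head_root {u v : X.V} {h : X.H} {l : List X.H}
    (hw : X.Walk u v (h :: l)) : X.root h = u := by
  cases hw
  rfl

lemma walk_nil_eq {u v : X.V} (hw : X.Walk u v []) : u = v := by
  cases hw
  rfl

lemma Walk.chain' {u v : X.V} {l : List X.H} (hw : X.Walk u v l) :
    l.Chain' (fun a b => X.root (X.inv a) = X.root b) := by
  induction hw with
  | nil v => exact List.isChain_nil
  | cons h hw ih =>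
      rename_i b l
      simp only [List.Chain']
      rw [List.isChain_cons]
      refine ⟨?_, ih⟩
      intro y hy
      rcases l with _ | ⟨h', t⟩
      · simp at hy
      · simp only [List.head?_cons, Option.mem_some_iff] at hy
        subst hy
        exact (hw.head_root).symm

lemma Walk.last_root {u v : X.V} {l : List X.H} (hw : X.Walk u v l)
    (hne : l ≠ []) : X.root (X.inv (l.getLast hne)) = v := by
  induction hw with
  | nil v => exact absurd rfl hne
  | cons h hw ih =>
      rename_i b l
      rcases l with _ | ⟨h', t⟩
      · have := walk_nil_eq hw
        simp only [List.getLast_singleton]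
        exact this
      · rw [List.getLast_cons (by simp)]
        exact ih (by simp)

lemma closedPath_of_walk {u : X.V} {l : List X.H} (hw : X.Walk u u l)
    (hne : l ≠ []) : X.IsClosedPath l := by
  refine ⟨hne, ?_⟩
  rcases l with _ | ⟨h, t⟩
  · exact absurd rfl hne
  · have htake : (h :: t).take 1 = [h] := rfl
    simp only [List.Chain']
    rw [htake, List.isChain_append]
    refine ⟨hw.chain', List.isChain_singleton _, ?_⟩
    intro x hx y hy
    rw [List.head?_cons, Option.mem_some_iff] at hy
    rw [List.getLast?_eq_getLast hne, Option.mem_some_iff] at hx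
    subst hx; subst hy
    rw [hw.last_root hne, hw.head_root]

lemma walk_of_chain' {l : List X.H} (hne : l ≠ [])
    (hc : l.Chain' (fun a b => X.root (X.inv a) = X.root b)) :
    X.Walk (X.root (l.head hne)) (X.root (X.inv (l.getLast hne))) l := by
  induction l with
  | nil => exact absurd rfl hne
  | cons h t ih =>
      rcases t with _ | ⟨h', t'⟩
      · exact walk_single
      · have hc' := hc
        simp only [List.Chain'] at hc'
        rw [List.isChain_cons_cons] at hc'
        have hw := ih (by simp) hc'.2
        rw [List.head_cons] at hw
        rw [List.getLast_cons (by simp)]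
        refine Walk.cons h ?_
        rwa [hc'.1]

lemma walk_of_closedPath {l : List X.H} (hcp : X.IsClosedPath l) :
    X.Walk (X.root (l.head hcp.1)) (X.root (l.head hcp.1)) l := by
  obtain ⟨hne, hc⟩ := hcp
  have hc1 : l.Chain' (fun a b => X.root (X.inv a) = X.root b) :=
    (List.isChain_append.1 hc).1
  have hw := walk_of_chain' hne hc1
  have hlink : X.root (X.inv (l.getLast hne)) = X.root (l.head hne) := by
    have := (List.isChain_append.1 hc).2.2
    refine this _ ?_ _ ?_
    · rw [List.getLast?_eq_getLast hne, Option.mem_some_iff]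
    · rcases l with _ | ⟨h, t⟩
      · exact absurd rfl hne
      · simp
  rwa [hlink] at hw

end WalkDef

end SerreGraph

namespace SerreGraph

open Submodule Module

section LinearGadgets

variable (X : SerreGraph) (Wp : X.V → Prop) (wt : X.H → ℂ)

/-- The coordinate vector of a vertex (zero if the vertex is not kept). -/
noncomputable def vecg (u : X.V) : {v : X.V // Wp v} → ℂ :=
  fun w => if (w : X.V) = u then 1 else 0

/-- The weighted boundary vector of a half-edge. -/
noncomputable def psig (h : X.H) : {v : X.V // Wp v} → ℂ :=
  X.vecg Wp (X.root h) - wt h • X.vecg Wp (X.root (X.inv h))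

/-- The column vector of an edge. -/
noncomputable def colg (o : X.Orientation) (e : X.Edge) : {v : X.V // Wp v} → ℂ :=
  X.psig Wp wt (o.pick e)

variable {X Wp wt}

lemma vecg_eq_zero {u : X.V} (hu : ¬ Wp u) : X.vecg Wp u = 0 := by
  funext w
  rw [vecg]
  rw [if_neg, Pi.zero_apply]
  intro hc
  exact hu (hc ▸ w.2)

lemma vecg_eq_single {u : X.V} (hu : Wp u) :
    X.vecg Wp u = Pi.single (⟨u, hu⟩ : {v : X.V // Wp v}) 1 := by
  funext w
  rw [vecg, Pi.single_apply]
  by_cases hw : (w : X.V) = u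
  · rw [if_pos hw, if_pos (Subtype.ext hw)]
  · rw [if_neg hw, if_neg (fun hc => hw (by rw [hc]))]

lemma vecg_linearIndependent (A : Finset X.V) (hA : ∀ u ∈ A, Wp u) :
    LinearIndependent ℂ (fun a : A => X.vecg Wp (a : X.V)) := by
  haveI : Fintype {v : X.V // Wp v} := Fintype.ofFinite _
  have hfun : (fun a : A => X.vecg Wp (a : X.V)) =
      (fun a : A => (Pi.basisFun ℂ {v : X.V // Wp v})
        ((fun a : A => (⟨a, hA a a.2⟩ : {v : X.V // Wp v})) a)) := by
    funext a
    rw [Pi.basisFun_apply, vecg_eq_single (hA a a.2)]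
  rw [hfun]
  refine (Pi.basisFun ℂ {v : X.V // Wp v}).linearIndependent.comp _ ?_
  intro a b hab
  apply Subtype.ext
  have := congrArg Subtype.val hab
  exact this

/-- If the coordinate vectors of the vertices of `A` lie in the span of the columns of `T`,
then `|A| ≤ |T|`. -/
lemma card_le_of_vecg_mem_span (o : X.Orientation) (A : Finset X.V) (hA : ∀ u ∈ A, Wp u)
    (T : Finset X.Edge)
    (hsp : ∀ u ∈ A, X.vecg Wp u ∈ span ℂ (X.colg Wp wt o '' (T : Set X.Edge))) :
    A.card ≤ T.card := by
  classical
  haveI : Fintype {v : X.V // Wp v} := Fintype.ofFinite _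
  have hind := vecg_linearIndependent A hA
  have h1 : finrank ℂ (span ℂ (Set.range (fun a : A => X.vecg Wp (a : X.V)))) = A.card := by
    rw [finrank_span_eq_card hind, Fintype.card_coe]
  have h2 : span ℂ (Set.range (fun a : A => X.vecg Wp (a : X.V))) ≤
      span ℂ (X.colg Wp wt o '' (T : Set X.Edge)) := by
    rw [span_le]
    rintro x ⟨a, rfl⟩
    exact hsp a a.2
  have h3 : X.colg Wp wt o '' (T : Set X.Edge) = ((T.image (X.colg Wp wt o) : Finset _) : Set _) := by
    rw [Finset.coe_image]
  have h4 : finrank ℂ (span ℂ (X.colg Wp wt o '' (T : Set X.Edge))) ≤ T.card := by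
    rw [h3]
    exact le_trans (finrank_span_finset_le_card _) (Finset.card_image_le)
  rw [← h1]
  exact le_trans (Submodule.finrank_mono h2) h4

lemma psig_inv (hwt : ∀ h, wt h * wt (X.inv h) = 1) (h : X.H) :
    X.psig Wp wt (X.inv h) = (-(wt (X.inv h))) • X.psig Wp wt h := by
  rw [psig, psig, X.inv_inv]
  rw [neg_smul, smul_sub, smul_smul, mul_comm, hwt h, one_smul, neg_sub]

lemma psig_mem_span (o : X.Orientation) (hwt : ∀ h, wt h * wt (X.inv h) = 1)
    {T : Finset X.Edge} {h : X.H} (hT : X.edgeOf h ∈ T) :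
    X.psig Wp wt h ∈ span ℂ (X.colg Wp wt o '' (T : Set X.Edge)) := by
  rcases X.pick_eq_or o h with hp | hp
  · have : X.colg Wp wt o (X.edgeOf h) = X.psig Wp wt h := by rw [colg, hp]
    rw [← this]
    exact subset_span (Set.mem_image_of_mem _ hT)
  · have hcol : X.colg Wp wt o (X.edgeOf h) = X.psig Wp wt (X.inv h) := by rw [colg, hp]
    have hps : X.psig Wp wt h = (-(wt h)) • X.psig Wp wt (X.inv h) := by
      have := psig_inv (Wp := Wp) hwt (X.inv h)
      rw [X.inv_inv] at this
      exact this
    rw [hps, ← hcol]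
    exact Submodule.smul_mem _ _ (subset_span (Set.mem_image_of_mem _ hT))

lemma colg_mem_span_psig (o : X.Orientation) (hwt : ∀ h, wt h * wt (X.inv h) = 1)
    {h : X.H} {s : Set ({v : X.V // Wp v} → ℂ)} (hs : X.psig Wp wt h ∈ span ℂ s) :
    X.colg Wp wt o (X.edgeOf h) ∈ span ℂ s := by
  rcases X.pick_eq_or o h with hp | hp
  · rw [colg, hp]; exact hs
  · rw [colg, hp, psig_inv hwt h]
    exact Submodule.smul_mem _ _ hs

/-- Telescoping along a walk. -/
lemma walk_telescope {u v : X.V} {l : List X.H} (hw : X.Walk u v l) :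
    X.vecg Wp u - (l.map wt).prod • X.vecg Wp v ∈
      span ℂ (X.psig Wp wt '' {h | h ∈ l}) := by
  induction hw with
  | nil v =>
      simp only [List.map_nil, List.prod_nil, one_smul, sub_self]
      exact Submodule.zero_mem _
  | cons h hw ih =>
      rename_i b l
      have hmono : span ℂ (X.psig Wp wt '' {k | k ∈ l}) ≤
          span ℂ (X.psig Wp wt '' {k | k ∈ h :: l}) := by
        apply span_mono
        apply Set.image_mono
        intro k hk
        exact List.mem_cons_of_mem h hk
      have hpsi : X.psig Wp wt h ∈ span ℂ (X.psig Wp wt '' {k | k ∈ h :: l}) :=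
        subset_span (Set.mem_image_of_mem _ List.mem_cons_self)
      have key : X.vecg Wp (X.root h) - ((h :: l).map wt).prod • X.vecg Wp b =
          X.psig Wp wt h + wt h • (X.vecg Wp (X.root (X.inv h)) - (l.map wt).prod • X.vecg Wp b) := by
        rw [psig, List.map_cons, List.prod_cons, smul_sub, smul_smul, mul_smul]
        abel
      rw [key]
      exact Submodule.add_mem _ hpsi (Submodule.smul_mem _ _ (hmono ih))

/-- Propagation of span membership along a walk. -/
lemma vecg_mem_span_of_walk (o : X.Orientation) (hwt : ∀ h, wt h * wt (X.inv h) = 1)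
    {T : Finset X.Edge} {u v : X.V} {l : List X.H} (hw : X.Walk u v l)
    (hl : ∀ h ∈ l, X.edgeOf h ∈ T)
    (hv : X.vecg Wp v ∈ span ℂ (X.colg Wp wt o '' (T : Set X.Edge))) :
    X.vecg Wp u ∈ span ℂ (X.colg Wp wt o '' (T : Set X.Edge)) := by
  have htel := walk_telescope (wt := wt) (Wp := Wp) hw
  have hle : span ℂ (X.psig Wp wt '' {h | h ∈ l}) ≤
      span ℂ (X.colg Wp wt o '' (T : Set X.Edge)) := by
    rw [span_le]
    rintro x ⟨h, hh, rfl⟩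
    exact psig_mem_span o hwt (hl h hh)
  have h1 : X.vecg Wp u - (l.map wt).prod • X.vecg Wp v ∈
      span ℂ (X.colg Wp wt o '' (T : Set X.Edge)) := hle htel
  have := Submodule.add_mem _ h1 (Submodule.smul_mem _ ((l.map wt).prod) hv)
  simpa using this

end LinearGadgets

end SerreGraph

namespace SerreGraph

open Submodule Module
open scoped Classical

section CycleDrop

variable {X : SerreGraph} {Wp : X.V → Prop} {wt : X.H → ℂ}

lemma Walk.tail {u v : X.V} {h : X.H} {t : List X.H}
    (hw : X.Walk u v (h :: t)) : X.Walk (X.root (X.inv h)) v t := by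
  cases hw
  assumption

lemma Walk.split {a b : X.V} {l₁ l₂ : List X.H} (hw : X.Walk a b (l₁ ++ l₂)) :
    ∃ m, X.Walk a m l₁ ∧ X.Walk m b l₂ := by
  induction l₁ generalizing a with
  | nil => exact ⟨a, Walk.nil a, hw⟩
  | cons h t ih =>
      rw [List.cons_append] at hw
      have ha : X.root h = a := hw.head_root
      have hw' := hw.tail
      obtain ⟨m, hm1, hm2⟩ := ih hw'
      exact ⟨m, by rw [← ha]; exact Walk.cons h hm1, hm2⟩

/-- Dropping one edge of a trivial-voltage cycle from a spanning set. -/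
lemma span_le_erase_of_cycle (o : X.Orientation) (hwt : ∀ h, wt h * wt (X.inv h) = 1)
    {l : List X.H} (hcp : X.IsClosedPath l) (hprod : (l.map wt).prod = 1)
    (hnd : (l.map X.edgeOf).Nodup) {S : Finset X.Edge} (hS : ∀ h ∈ l, X.edgeOf h ∈ S) :
    ∃ e ∈ S, span ℂ (X.colg Wp wt o '' (S : Set X.Edge)) ≤
      span ℂ (X.colg Wp wt o '' ((S.erase e : Finset X.Edge) : Set X.Edge)) := by
  rcases l with _ | ⟨h₀, t⟩
  · exact absurd rfl hcp.1
  · have hw := walk_of_closedPath hcp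
    rw [List.head_cons] at hw
    have hwt' : X.Walk (X.root (X.inv h₀)) (X.root h₀) t := hw.tail
    have htel := walk_telescope (Wp := Wp) (wt := wt) hwt'
    set e₀ := X.edgeOf h₀ with he₀
    have he₀S : e₀ ∈ S := hS h₀ (by simp)
    have hprod' : wt h₀ * (t.map wt).prod = 1 := by
      rw [List.map_cons, List.prod_cons] at hprod
      exact hprod
    -- psig h₀ lies in the span of the psig of the tail
    have hkey : X.psig Wp wt h₀ ∈ span ℂ (X.psig Wp wt '' {h | h ∈ t}) := by
      have h2 : -(X.psig Wp wt h₀) =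
          wt h₀ • (X.vecg Wp (X.root (X.inv h₀)) - (t.map wt).prod • X.vecg Wp (X.root h₀)) := by
        rw [psig, smul_sub, smul_smul, hprod', one_smul, neg_sub]
      have h3 := Submodule.smul_mem _ (wt h₀) htel
      rw [← h2] at h3
      simpa using (Submodule.neg_mem _ h3)
    have hnd' : e₀ ∉ t.map X.edgeOf := by
      rw [List.map_cons] at hnd
      exact (List.nodup_cons.1 hnd).1
    have hle1 : span ℂ (X.psig Wp wt '' {h | h ∈ t}) ≤
        span ℂ (X.colg Wp wt o '' ((S.erase e₀ : Finset X.Edge) : Set X.Edge)) := by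
      rw [span_le]
      rintro x ⟨h, hh, rfl⟩
      refine psig_mem_span o hwt ?_
      refine Finset.mem_erase.2 ⟨?_, hS h (List.mem_cons_of_mem _ hh)⟩
      intro hc
      exact hnd' (hc ▸ List.mem_map_of_mem (f := X.edgeOf) hh)
    have hcol : X.colg Wp wt o e₀ ∈
        span ℂ (X.colg Wp wt o '' ((S.erase e₀ : Finset X.Edge) : Set X.Edge)) :=
      colg_mem_span_psig o hwt (hle1 hkey)
    refine ⟨e₀, he₀S, ?_⟩
    rw [span_le]
    rintro x ⟨e, he, rfl⟩
    by_cases hee : e = e₀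
    · rw [hee]; exact hcol
    · exact subset_span (Set.mem_image_of_mem _ (Finset.mem_coe.2 (Finset.mem_erase.2 ⟨hee, he⟩)))

end CycleDrop

section Acyclic

variable (X : SerreGraph)

/-- The vertices touched by an edge set. -/
noncomputable def touchedF (S : Finset X.Edge) : Finset X.V :=
  Finset.univ.filter (fun v => ∃ h, X.edgeOf h ∈ S ∧ X.root h = v)

variable {X}

lemma mem_touchedF {S : Finset X.Edge} {v : X.V} :
    v ∈ X.touchedF S ↔ ∃ h, X.edgeOf h ∈ S ∧ X.root h = v := by
  simp [touchedF]

lemma touchedF_mono {S S' : Finset X.Edge} (h : S' ⊆ S) : X.touchedF S' ⊆ X.touchedF S := by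
  intro v hv
  obtain ⟨k, hk1, hk2⟩ := mem_touchedF.1 hv
  exact mem_touchedF.2 ⟨k, h hk1, hk2⟩

lemma isEdgeCycle_mono {S S' : Finset X.Edge} (h : S' ⊆ S) {l : List X.H}
    (hl : X.IsEdgeCycle S' l) : X.IsEdgeCycle S l :=
  ⟨hl.1, fun k hk => h (hl.2.1 k hk), hl.2.2⟩

lemma trail_length_le {S : Finset X.Edge} {l : List X.H}
    (hmem : ∀ h ∈ l, X.edgeOf h ∈ S) (hnd : (l.map X.edgeOf).Nodup) :
    l.length ≤ S.card := by
  have h1 : (l.map X.edgeOf).toFinset ⊆ S := by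
    intro e he
    rw [List.mem_toFinset, List.mem_map] at he
    obtain ⟨h, hh, rfl⟩ := he
    exact hmem h hh
  have h2 := Finset.card_le_card h1
  rw [List.toFinset_card_of_nodup hnd, List.length_map] at h2
  exact h2

lemma loop_is_cycle {S : Finset X.Edge} {h : X.H} (hS : X.edgeOf h ∈ S)
    (hloop : X.root (X.inv h) = X.root h) : X.IsEdgeCycle S [h] := by
  refine ⟨⟨by simp, ?_⟩, by simpa using hS, by simp⟩
  simp only [List.take_cons, List.take_zero, List.cons_append, List.nil_append]
  exact List.isChain_pair.2 hloop

/-- In a nonempty acyclic edge set there is a "leaf" half-edge: the unique half-edge of `S`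
at its root vertex. -/
lemma exists_leaf {S : Finset X.Edge} (hne : S.Nonempty)
    (hacyc : ∀ l, ¬ X.IsEdgeCycle S l) :
    ∃ h : X.H, X.edgeOf h ∈ S ∧
      ∀ k : X.H, X.root k = X.root h → X.edgeOf k ∈ S → k = h := by
  classical
  set P : ℕ → Prop := fun n => ∃ (l : List X.H) (a b : X.V), X.Walk a b l ∧
    (∀ h ∈ l, X.edgeOf h ∈ S) ∧ (l.map X.edgeOf).Nodup ∧ l.length = n with hP
  obtain ⟨e, heS⟩ := hne
  obtain ⟨h1, hh1⟩ := X.edgeOf_surjective e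
  have hP1 : P 1 := by
    refine ⟨[h1], X.root h1, X.root (X.inv h1), walk_single, ?_, by simp, by simp⟩
    intro h hh
    rw [List.mem_singleton.1 hh, hh1]
    exact heS
  have hSpos : 1 ≤ S.card := Finset.card_pos.2 ⟨e, heS⟩
  set N := Nat.findGreatest P S.card with hN
  have hPN : P N := Nat.findGreatest_spec hSpos hP1
  have hN1 : 1 ≤ N := Nat.le_findGreatest hSpos hP1
  obtain ⟨l, a, b, hwalk, hmem, hnd, hlen⟩ := hPN
  have hlne : l ≠ [] := by
    intro hc
    rw [hc] at hlen
    simp at hlen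
    omega
  have hb : X.root (X.inv (l.getLast hlne)) = b := hwalk.last_root hlne
  set hl := l.getLast hlne with hhl
  have hlmem : hl ∈ l := List.getLast_mem hlne
  refine ⟨X.inv hl, by rw [X.edgeOf_inv]; exact hmem hl hlmem, ?_⟩
  intro k hk hkS
  by_contra hkne
  rw [hb] at hk
  -- case A : the edge of k is not on the trail
  by_cases hcase : X.edgeOf k ∈ l.map X.edgeOf
  · -- the edge of k appears on the trail; extract a cycle
    rw [List.mem_map] at hcase
    obtain ⟨hi, hhi, hie⟩ := hcase
    obtain ⟨l₁, l₂, rfl⟩ := List.append_of_mem hhi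
    obtain ⟨m, hw1, hw2⟩ := hwalk.split
    have hm : X.root hi = m := hw2.head_root
    rcases X.edge_eq_or hie with hk1 | hk1
    · -- k = hi : the segment from hi to the end is closed
      have hroot : m = b := by rw [← hm, ← hk1, hk]
      rw [hroot] at hw2
      have hcyc : X.IsEdgeCycle S (hi :: l₂) := by
        refine ⟨closedPath_of_walk hw2 (by simp), ?_, ?_⟩
        · intro h hh
          exact hmem h (by simp [List.mem_append.2 (Or.inr hh)])
        · have hsuf : (hi :: l₂).map X.edgeOf <:+ (l₁ ++ hi :: l₂).map X.edgeOf :=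
            (List.suffix_append l₁ (hi :: l₂)).map _
          exact hsuf.sublist.nodup hnd
      exact hacyc _ hcyc
    · -- k = inv hi
      have hl₂ne : l₂ ≠ [] := by
        intro hc
        subst hc
        have hlast : (l₁ ++ [hi]).getLast hlne = hi := by
          simpa using List.getLast_append' l₁ [hi] (by simp)
        exact hkne (by rw [hk1, hhl, hlast])
      have hroot : X.root (X.inv hi) = b := by
        rw [← hk1, hk]
      have hw3 := hw2.tail
      rw [hroot] at hw3
      -- need the end of hw3 : b; hw3 : Walk b b l₂? hw3 : Walk (root (inv hi)) b l₂
      have hcyc : X.IsEdgeCycle S l₂ := by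
        refine ⟨closedPath_of_walk hw3 hl₂ne, ?_, ?_⟩
        · intro h hh
          exact hmem h (by simp [hh])
        · have hsuf : l₂.map X.edgeOf <:+ (l₁ ++ hi :: l₂).map X.edgeOf := by
            refine List.IsSuffix.map _ ?_
            exact ⟨l₁ ++ [hi], by simp⟩
          exact hsuf.sublist.nodup hnd
      exact hacyc _ hcyc
  · -- extend the trail, contradicting maximality
    have hext : P (N + 1) := by
      refine ⟨l ++ [k], a, X.root (X.inv k), ?_, ?_, ?_, by simp [hlen]⟩
      · refine hwalk.append ?_
        rw [← hk]
        exact walk_single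
      · intro h hh
        rcases List.mem_append.1 hh with hmm | hmm
        · exact hmem h hmm
        · rw [List.mem_singleton.1 hmm]
          exact hkS
      · rw [List.map_append]
        refine List.Nodup.append hnd (by simp) ?_
        intro x hx hy
        rw [List.map_cons, List.map_nil, List.mem_singleton] at hy
        subst hy
        exact hcase hx
    have hbound : N + 1 ≤ S.card := by
      obtain ⟨l', a', b', hw', hmem', hnd', hlen'⟩ := hext
      rw [← hlen']
      exact trail_length_le hmem' hnd'
    exact Nat.findGreatest_is_greatest (by omega) hbound hext

end Acyclic

end SerreGraph

namespace SerreGraph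

open scoped Classical

variable {X : SerreGraph}

lemma acyclic_card_lt : ∀ (n : ℕ) (S : Finset X.Edge), S.card = n → S.Nonempty →
    (∀ l, ¬ X.IsEdgeCycle S l) → S.card < (X.touchedF S).card := by
  intro n
  induction n using Nat.strong_induction_on with
  | _ n ih =>
    intro S hcard hne hacyc
    obtain ⟨h, hhS, hleaf⟩ := exists_leaf hne hacyc
    set b := X.root h with hb
    set e := X.edgeOf h with he
    set S' := S.erase e with hS'
    have hnoloop : X.root (X.inv h) ≠ b := by
      intro hc
      exact hacyc [h] (loop_is_cycle hhS hc)
    have hbS : b ∈ X.touchedF S := mem_touchedF.2 ⟨h, hhS, rfl⟩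
    have hrb : X.root (X.inv h) ∈ X.touchedF S :=
      mem_touchedF.2 ⟨X.inv h, by rw [X.edgeOf_inv]; exact hhS, rfl⟩
    have hbS' : b ∉ X.touchedF S' := by
      intro hc
      obtain ⟨k, hk1, hk2⟩ := mem_touchedF.1 hc
      have := hleaf k hk2 (Finset.erase_subset _ _ hk1)
      rw [this] at hk1
      exact (Finset.notMem_erase e S) (by rw [← he] at hk1; exact hk1)
    by_cases hS'ne : S'.Nonempty
    · have hacyc' : ∀ l, ¬ X.IsEdgeCycle S' l := by
        intro l hl
        exact hacyc l (isEdgeCycle_mono (Finset.erase_subset _ _) hl)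
      have hlt : S'.card < n := by
        rw [← hcard, hS']
        exact Finset.card_erase_lt_of_mem hhS
      have hih := ih S'.card hlt S' rfl hS'ne hacyc'
      have hsub : insert b (X.touchedF S') ⊆ X.touchedF S :=
        Finset.insert_subset hbS (touchedF_mono (Finset.erase_subset _ _))
      have hcard2 : (X.touchedF S').card + 1 ≤ (X.touchedF S).card := by
        have := Finset.card_le_card hsub
        rwa [Finset.card_insert_of_notMem hbS'] at this
      have hcards : S.card = S'.card + 1 := by
        rw [hS', Finset.card_erase_add_one hhS]
      omega
    · have hS'0 : S' = ∅ := Finset.not_nonempty_iff_eq_empty.1 hS'ne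
      have hS1 : S.card = 1 := by
        have := Finset.card_erase_add_one hhS
        rw [← hS', hS'0] at this
        simpa using this.symm
      have hpair : ({b, X.root (X.inv h)} : Finset X.V) ⊆ X.touchedF S := by
        intro v hv
        rcases Finset.mem_insert.1 hv with rfl | hv
        · exact hbS
        · rw [Finset.mem_singleton.1 hv]
          exact hrb
      have h2 : 2 ≤ (X.touchedF S).card := by
        have := Finset.card_le_card hpair
        rwa [Finset.card_pair (fun hc => hnoloop hc.symm)] at this
      omega

lemma touchedF_edgesIn_subset {F : Finset X.Edge} {C : Finset X.V}
    (hC : C ∈ X.components F) : X.touchedF (X.edgesIn F C) ⊆ C := by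
  intro v hv
  obtain ⟨k, hk1, hk2⟩ := mem_touchedF.1 hv
  rw [← hk2]
  exact X.root_mem_of_edgesIn hC hk1 rfl

/-- A connected component with at least as many edges as vertices contains an edge cycle. -/
lemma exists_cycle_of_card_le {F : Finset X.Edge} {C : Finset X.V}
    (hC : C ∈ X.components F) (hcard : C.card ≤ (X.edgesIn F C).card) :
    ∃ l, X.IsEdgeCycle (X.edgesIn F C) l := by
  by_contra hacyc
  push_neg at hacyc
  have hCne := X.components_nonempty hC
  have hne : (X.edgesIn F C).Nonempty := by
    rw [← Finset.card_pos]
    have := Finset.card_pos.2 hCne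
    omega
  have h1 := acyclic_card_lt (X.edgesIn F C).card (X.edgesIn F C) rfl hne
    (fun l hl => hacyc l hl)
  have h2 := Finset.card_le_card (touchedF_edgesIn_subset hC)
  omega

end SerreGraph

namespace SerreGraph

open Submodule Module

section Rho

variable {G : Type} [CommGroup G] (ρ : G →* ℂ)

lemma rho_ne_zero (g : G) : ρ g ≠ 0 := by
  intro hc
  have h1 : ρ g * ρ g⁻¹ = 1 := by
    rw [← map_mul, mul_inv_cancel, map_one]
  rw [hc, zero_mul] at h1
  exact zero_ne_one h1

lemma rho_inv (g : G) : ρ g⁻¹ = (ρ g)⁻¹ := by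
  have h1 : ρ g⁻¹ * ρ g = 1 := by
    rw [← map_mul, inv_mul_cancel, map_one]
  exact eq_inv_of_mul_eq_one_left h1

end Rho

section PathVoltage

variable {G : Type} [CommGroup G] {X : SerreGraph} (o : X.Orientation) (η : X.Edge → G)

lemma pathVoltage_append (l₁ l₂ : List X.H) :
    X.pathVoltage o η (l₁ ++ l₂) = X.pathVoltage o η l₁ * X.pathVoltage o η l₂ := by
  rw [pathVoltage, pathVoltage, pathVoltage, List.map_append, List.prod_append]

lemma pathVoltage_cons (h : X.H) (l : List X.H) :
    X.pathVoltage o η (h :: l) = X.halfVoltage o η h * X.pathVoltage o η l := by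
  rw [pathVoltage, pathVoltage, List.map_cons, List.prod_cons]

lemma prod_map_inv_list {α : Type} (f : α → G) (l : List α) :
    (l.map (fun x => (f x)⁻¹)).prod = ((l.map f).prod)⁻¹ := by
  induction l with
  | nil => simp
  | cons a t ih => simp [ih, mul_comm]

lemma pathVoltage_rev (l : List X.H) :
    X.pathVoltage o η (l.reverse.map X.inv) = (X.pathVoltage o η l)⁻¹ := by
  rw [pathVoltage, pathVoltage, List.map_map]
  have h1 : (X.halfVoltage o η ∘ X.inv) = fun h => (X.halfVoltage o η h)⁻¹ := by
    funext h
    exact X.halfVoltage_inv o η h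
  rw [h1, List.map_reverse, List.prod_reverse, prod_map_inv_list]

variable (ρ : G →* ℂ)

lemma prod_map_wt (l : List X.H) :
    (l.map (fun h => ρ (X.halfVoltage o η h))).prod = ρ (X.pathVoltage o η l) := by
  rw [pathVoltage, map_list_prod, List.map_map]
  rfl

lemma wt_mul_inv (h : X.H) :
    ρ (X.halfVoltage o η h) * ρ (X.halfVoltage o η (X.inv h)) = 1 := by
  rw [X.halfVoltage_inv o η h, ← map_mul, mul_inv_cancel, map_one]

end PathVoltage

section Cover

variable {G : Type} [CommGroup G] [Fintype G] {Xt X : SerreGraph}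
  (c : GCover G Xt X) (o : X.Orientation) (σ : X.V → Xt.V) (η : X.Edge → G) (ρ : G →* ℂ)

lemma smulV_cancel (g : G) (w : Xt.V) : c.smulV g⁻¹ (c.smulV g w) = w := by
  rw [← c.mul_smulV, inv_mul_cancel, c.one_smulV]

lemma stab_mem_dilation (hrep : c.IsVoltageRep o σ η) {g : G} {v : X.V}
    (hg : c.smulV g (σ v) = σ v) : g ∈ c.dilation v := by
  intro w hw
  obtain ⟨k, hk⟩ := c.vertex_trans (σ v) w (by rw [hrep.sec, hw])
  calc c.smulV g w = c.smulV g (c.smulV k (σ v)) := by rw [hk]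
    _ = c.smulV (g * k) (σ v) := by rw [c.mul_smulV]
    _ = c.smulV (k * g) (σ v) := by rw [mul_comm]
    _ = c.smulV k (c.smulV g (σ v)) := by rw [c.mul_smulV]
    _ = w := by rw [hg, hk]

/-- If `ρ` kills all dilation groups and all closed-path voltages, the cover is
disconnected: contradiction with connectivity. -/
lemma cover_forces_nontrivial (hX : X.Connected) (hXt : Xt.Connected)
    (hrep : c.IsVoltageRep o σ η) (hρ : ρ ≠ 1)
    (hdil : ∀ v : X.V, ∀ g ∈ c.dilation v, ρ g = 1) :
    ∃ l : List X.H, X.IsClosedPath l ∧ ρ (X.pathVoltage o η l) ≠ 1 := by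
  by_contra hcon
  push_neg at hcon
  obtain ⟨v₀⟩ := hX.1
  have hwalks : ∀ v, ∃ l, X.Walk v₀ v l := fun v =>
    ((walk_of_compRel (hX.2 v₀ v)).imp (fun l hl => hl.1))
  choose pth hpth using hwalks
  let f : X.V → ℂ := fun v => (ρ (X.pathVoltage o η (pth v)))⁻¹
  have hf0 : ∀ v, f v ≠ 0 := fun v => inv_ne_zero (rho_ne_zero ρ _)
  have hcoc : ∀ h : X.H, f (X.root h) = f (X.root (X.inv h)) * ρ (X.halfVoltage o η h) := by
    intro h
    have hwL : X.Walk v₀ v₀ (pth (X.root h) ++ (h :: ((pth (X.root (X.inv h))).reverse.map X.inv))) := by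
      refine (hpth (X.root h)).append ?_
      exact Walk.cons h ((hpth (X.root (X.inv h))).rev)
    have hLne : (pth (X.root h) ++ (h :: ((pth (X.root (X.inv h))).reverse.map X.inv))) ≠ [] := by
      simp
    have h1 := hcon _ (closedPath_of_walk hwL hLne)
    rw [pathVoltage_append, pathVoltage_cons, pathVoltage_rev] at h1
    rw [map_mul, map_mul, rho_inv] at h1
    set A := ρ (X.pathVoltage o η (pth (X.root h))) with hA
    set B := ρ (X.halfVoltage o η h) with hB
    set Cc := ρ (X.pathVoltage o η (pth (X.root (X.inv h)))) with hC
    have hA0 : A ≠ 0 := rho_ne_zero ρ _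
    have hB0 : B ≠ 0 := rho_ne_zero ρ _
    have hC0 : Cc ≠ 0 := rho_ne_zero ρ _
    show A⁻¹ = Cc⁻¹ * B
    field_simp at h1
    rw [← h1, mul_inv, mul_assoc, inv_mul_cancel₀ hB0, mul_one]
  -- the locally constant function on the cover
  have hsec : ∀ w : Xt.V, c.vMap (σ (c.vMap w)) = c.vMap w := fun w => hrep.sec _
  have hex : ∀ w : Xt.V, ∃ g, c.smulV g (σ (c.vMap w)) = w := fun w =>
    c.vertex_trans (σ (c.vMap w)) w (hsec w)
  choose gch hgch using hex
  let Φ : Xt.V → ℂ := fun w => ρ (gch w) * f (c.vMap w)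
  have hΦwd : ∀ (w : Xt.V) (g : G), c.smulV g (σ (c.vMap w)) = w →
      Φ w = ρ g * f (c.vMap w) := by
    intro w g hgw
    have haux := congrArg (c.smulV (gch w)⁻¹) (hgch w)
    rw [smulV_cancel] at haux
    have hst : c.smulV ((gch w)⁻¹ * g) (σ (c.vMap w)) = σ (c.vMap w) := by
      rw [c.mul_smulV, hgw, haux]
    have h1 : ρ ((gch w)⁻¹ * g) = 1 :=
      hdil _ _ (stab_mem_dilation c o σ η hrep hst)
    rw [map_mul, rho_inv] at h1
    have h2 : ρ (gch w) = ρ g := (inv_mul_eq_one₀ (rho_ne_zero ρ _)).1 h1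
    show ρ (gch w) * f (c.vMap w) = ρ g * f (c.vMap w)
    rw [h2]
  have hedge : ∀ ht : Xt.H, Φ (Xt.root ht) = Φ (Xt.root (Xt.inv ht)) := by
    intro ht
    obtain ⟨ht', hh1, hh2, hh3⟩ := hrep.lift (X.edgeOf (c.hMap ht))
    have hcond : c.hMap ht = c.hMap ht' ∨ c.hMap ht = X.inv (c.hMap ht') := by
      rw [hh1]
      rcases X.pick_eq_or o (c.hMap ht) with hp | hp
      · left; exact hp.symm
      · right; rw [hp, X.inv_inv]
    obtain ⟨g, hg⟩ := c.edge_trans ht' ht hcond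
    have hvk : X.halfVoltage o η (o.pick (X.edgeOf (c.hMap ht))) = η (X.edgeOf (c.hMap ht)) := by
      rw [halfVoltage, o.pick_spec, if_pos rfl]
    have hfk : f (X.root (o.pick (X.edgeOf (c.hMap ht)))) =
        ρ (η (X.edgeOf (c.hMap ht))) *
          f (X.root (X.inv (o.pick (X.edgeOf (c.hMap ht))))) := by
      rw [hcoc (o.pick (X.edgeOf (c.hMap ht))), hvk, mul_comm]
    rcases hg with hg | hg
    · have hr1 : Xt.root ht = c.smulV g (σ (X.root (o.pick (X.edgeOf (c.hMap ht))))) := by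
        conv_lhs => rw [← hg]
        rw [c.root_smulH, hh2]
      have hr2 : Xt.root (Xt.inv ht) =
          c.smulV (g * η (X.edgeOf (c.hMap ht)))
            (σ (X.root (X.inv (o.pick (X.edgeOf (c.hMap ht)))))) := by
        conv_lhs => rw [← hg]
        rw [← c.smulH_inv, c.root_smulH, hh3, ← c.mul_smulV]
      have hv1 : c.vMap (Xt.root ht) = X.root (o.pick (X.edgeOf (c.hMap ht))) := by
        rw [hr1, c.vMap_smulV, hrep.sec]
      have hv2 : c.vMap (Xt.root (Xt.inv ht)) =
          X.root (X.inv (o.pick (X.edgeOf (c.hMap ht)))) := by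
        rw [hr2, c.vMap_smulV, hrep.sec]
      have hΦ1 : Φ (Xt.root ht) = ρ g * f (X.root (o.pick (X.edgeOf (c.hMap ht)))) := by
        have := hΦwd (Xt.root ht) g (by rw [hv1, ← hr1])
        rwa [hv1] at this
      have hΦ2 : Φ (Xt.root (Xt.inv ht)) = ρ (g * η (X.edgeOf (c.hMap ht))) *
          f (X.root (X.inv (o.pick (X.edgeOf (c.hMap ht))))) := by
        have := hΦwd (Xt.root (Xt.inv ht)) (g * η (X.edgeOf (c.hMap ht))) (by rw [hv2, ← hr2])
        rwa [hv2] at this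
      rw [hΦ1, hΦ2, hfk, map_mul]
      ring
    · have hr2 : Xt.root (Xt.inv ht) =
          c.smulV g (σ (X.root (o.pick (X.edgeOf (c.hMap ht))))) := by
        conv_lhs => rw [← hg]
        rw [c.root_smulH, hh2]
      have hr1 : Xt.root ht =
          c.smulV (g * η (X.edgeOf (c.hMap ht)))
            (σ (X.root (X.inv (o.pick (X.edgeOf (c.hMap ht)))))) := by
        conv_lhs => rw [show ht = Xt.inv (Xt.inv ht) from (Xt.inv_inv ht).symm, ← hg]
        rw [← c.smulH_inv, c.root_smulH, hh3, ← c.mul_smulV]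
      have hv1 : c.vMap (Xt.root ht) =
          X.root (X.inv (o.pick (X.edgeOf (c.hMap ht)))) := by
        rw [hr1, c.vMap_smulV, hrep.sec]
      have hv2 : c.vMap (Xt.root (Xt.inv ht)) =
          X.root (o.pick (X.edgeOf (c.hMap ht))) := by
        rw [hr2, c.vMap_smulV, hrep.sec]
      have hΦ1 : Φ (Xt.root ht) = ρ (g * η (X.edgeOf (c.hMap ht))) *
          f (X.root (X.inv (o.pick (X.edgeOf (c.hMap ht))))) := by
        have := hΦwd (Xt.root ht) (g * η (X.edgeOf (c.hMap ht))) (by rw [hv1, ← hr1])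
        rwa [hv1] at this
      have hΦ2 : Φ (Xt.root (Xt.inv ht)) =
          ρ g * f (X.root (o.pick (X.edgeOf (c.hMap ht)))) := by
        have := hΦwd (Xt.root (Xt.inv ht)) g (by rw [hv2, ← hr2])
        rwa [hv2] at this
      rw [hΦ1, hΦ2, hfk, map_mul]
      ring
  have hconst : ∀ w w' : Xt.V, Φ w = Φ w' := by
    intro w w'
    have hrel := hXt.2 w w'
    induction hrel with
    | refl => rfl
    | tail _ hstep ih =>
        obtain ⟨ht, hta, htb, _⟩ := hstep
        rw [ih, ← hta, ← htb]
        exact hedge ht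
  have hg₀ : ∃ g₀ : G, ρ g₀ ≠ 1 := by
    by_contra hc
    push_neg at hc
    exact hρ (MonoidHom.ext (fun g => by rw [hc g]; rfl))
  obtain ⟨g₀, hg₀⟩ := hg₀
  have hΦ1 : Φ (σ v₀) = f v₀ := by
    have := hΦwd (σ v₀) 1 (by rw [hrep.sec, c.one_smulV])
    rw [this, map_one, one_mul, hrep.sec]
  have hΦ2 : Φ (c.smulV g₀ (σ v₀)) = ρ g₀ * f v₀ := by
    have hvm : c.vMap (c.smulV g₀ (σ v₀)) = v₀ := by rw [c.vMap_smulV, hrep.sec]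
    have := hΦwd (c.smulV g₀ (σ v₀)) g₀ (by rw [hvm])
    rw [this, hvm]
  have hcc := hconst (σ v₀) (c.smulV g₀ (σ v₀))
  rw [hΦ1, hΦ2] at hcc
  have h3 : (ρ g₀ - 1) * f v₀ = 0 := by linear_combination -hcc
  rcases mul_eq_zero.1 h3 with h4 | h4
  · exact hg₀ (by linear_combination h4)
  · exact hf0 v₀ h4

end Cover

end SerreGraph

namespace SerreGraph

open Submodule Module

section TwistedMatroid

variable {G : Type} [CommGroup G] [Fintype G] {Xt X : SerreGraph}

/-- Vertices whose dilation group is killed by `ρ`. -/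
def wQ (c : GCover G Xt X) (ρ : G →* ℂ) : X.V → Prop :=
  fun v => ¬ ∃ g ∈ c.dilation v, ρ g ≠ 1

/-- The edge weight function attached to `ρ` and `η`. -/
@[reducible] noncomputable def wtc (o : X.Orientation) (η : X.Edge → G) (ρ : G →* ℂ) : X.H → ℂ :=
  fun h => ρ (X.halfVoltage o η h)

/-- The twisted column of an edge. -/
@[reducible] noncomputable def colc (c : GCover G Xt X) (o : X.Orientation) (η : X.Edge → G)
    (ρ : G →* ℂ) : X.Edge → ({v : X.V // wQ c ρ v} → ℂ) :=
  X.colg (wQ c ρ) (wtc o η ρ) o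

variable (c : GCover G Xt X) (o : X.Orientation) (η : X.Edge → G) (ρ : G →* ℂ)

lemma hwtc : ∀ h, wtc o η ρ h * wtc o η ρ (X.inv h) = 1 :=
  fun h => wt_mul_inv o η ρ h

lemma span_eq_top_of_vecg {Wp : X.V → Prop} {s : Set ({v : X.V // Wp v} → ℂ)}
    (hall : ∀ u, Wp u → X.vecg Wp u ∈ span ℂ s) : span ℂ s = ⊤ := by
  haveI : Fintype {v : X.V // Wp v} := Fintype.ofFinite _
  refine le_antisymm le_top ?_
  rw [← (Pi.basisFun ℂ {v : X.V // Wp v}).span_eq, span_le]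
  rintro x ⟨w, rfl⟩
  have : (Pi.basisFun ℂ {v : X.V // Wp v}) w = X.vecg Wp (w : X.V) := by
    rw [Pi.basisFun_apply, vecg_eq_single w.2]
  rw [this]
  exact hall (w : X.V) w.2

/-- Nondegeneracy: the full twisted incidence matrix has full row rank. -/
lemma span_colc_top (hX : X.Connected) (hXt : Xt.Connected) (σ : X.V → Xt.V)
    (hrep : c.IsVoltageRep o σ η) (hρ : ρ ≠ 1) :
    span ℂ (colc c o η ρ '' ((Finset.univ : Finset X.Edge) : Set X.Edge)) = ⊤ := by
  apply span_eq_top_of_vecg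
  intro u hu
  by_cases hD : ∃ v : X.V, ∃ g ∈ c.dilation v, ρ g ≠ 1
  · obtain ⟨v, hv⟩ := hD
    obtain ⟨l, hw, hl⟩ := walk_of_compRel (hX.2 u v)
    refine vecg_mem_span_of_walk o (hwtc o η ρ) hw (fun h _ => Finset.mem_univ _) ?_
    rw [vecg_eq_zero (fun hc => hc hv)]
    exact Submodule.zero_mem _
  · push_neg at hD
    obtain ⟨l, hcl, hne1⟩ := cover_forces_nontrivial c o σ η ρ hX hXt hrep hρ hD
    have hw := walk_of_closedPath hcl
    set u₀ := X.root (l.head hcl.1) with hu₀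
    have htel := walk_telescope (Wp := wQ c ρ) (wt := wtc o η ρ) hw
    have hprod : (l.map (wtc o η ρ)).prod = ρ (X.pathVoltage o η l) := prod_map_wt o η ρ l
    have hle : span ℂ (X.psig (wQ c ρ) (wtc o η ρ) '' {h | h ∈ l}) ≤
        span ℂ (colc c o η ρ '' ((Finset.univ : Finset X.Edge) : Set X.Edge)) := by
      rw [span_le]
      rintro x ⟨h, _, rfl⟩
      exact psig_mem_span o (hwtc o η ρ) (Finset.mem_univ _)
    have h1 : (1 - ρ (X.pathVoltage o η l)) • X.vecg (wQ c ρ) u₀ ∈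
        span ℂ (colc c o η ρ '' ((Finset.univ : Finset X.Edge) : Set X.Edge)) := by
      have := hle htel
      rw [hprod] at this
      rwa [sub_smul, one_smul]
    have hne : (1 - ρ (X.pathVoltage o η l)) ≠ 0 :=
      sub_ne_zero.2 (fun hc => hne1 hc.symm)
    have h2 : X.vecg (wQ c ρ) u₀ ∈
        span ℂ (colc c o η ρ '' ((Finset.univ : Finset X.Edge) : Set X.Edge)) :=
      (Submodule.smul_mem_iff _ hne).1 h1
    obtain ⟨l', hw', hl'⟩ := walk_of_compRel (hX.2 u u₀)
    exact vecg_mem_span_of_walk o (hwtc o η ρ) hw' (fun h _ => Finset.mem_univ _) h2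

/-- Independence for the untwisted matroid downstairs. -/
def colIndep (I : Set X.Edge) : Prop :=
  LinearIndependent ℂ (fun e : I => colc c o η ρ e)

lemma colIndep_empty : colIndep c o η ρ ∅ :=
  linearIndependent_empty_type

lemma colIndep_mono {I J : Set X.Edge} (hJ : colIndep c o η ρ J) (hIJ : I ⊆ J) :
    colIndep c o η ρ I :=
  hJ.comp (Set.inclusion hIJ) (Set.inclusion_injective hIJ)

lemma colIndep_ncard_le {I : Set X.Edge} (hI : colIndep c o η ρ I) :
    I.ncard = finrank ℂ (span ℂ (colc c o η ρ '' I)) := by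
  haveI : Fintype I := Fintype.ofFinite _
  rw [Set.image_eq_range, finrank_span_eq_card hI, ← Nat.card_coe_set_eq,
    Nat.card_eq_fintype_card]

lemma colIndep_aug {I J : Set X.Edge} (hI : colIndep c o η ρ I) (hJ : colIndep c o η ρ J)
    (hIJ : I.ncard < J.ncard) : ∃ e ∈ J, e ∉ I ∧ colIndep c o η ρ (insert e I) := by
  by_contra hcon
  push_neg at hcon
  have hallJ : ∀ e ∈ J, colc c o η ρ e ∈ span ℂ (colc c o η ρ '' I) := by
    intro e heJ
    by_cases heI : e ∈ I
    · exact subset_span (Set.mem_image_of_mem _ heI)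
    · have h1 := hcon e heJ heI
      rw [colIndep] at h1
      change ¬ LinearIndepOn ℂ (colc c o η ρ) (insert e I) at h1
      rw [linearIndepOn_insert heI] at h1
      by_contra h2
      exact h1 ⟨hI, h2⟩
  have hle : span ℂ (colc c o η ρ '' J) ≤ span ℂ (colc c o η ρ '' I) := by
    rw [span_le]
    rintro x ⟨e, he, rfl⟩
    exact hallJ e he
  have h3 := colIndep_ncard_le c o η ρ hI
  have h4 := colIndep_ncard_le c o η ρ hJ
  have h5 := Submodule.finrank_mono hle
  omega

/-- The twisted matroid, as the dual of the column matroid of the twisted incidence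
matrix. -/
noncomputable def twM : Matroid X.Edge :=
  (IndepMatroid.ofFinite Set.finite_univ (colIndep c o η ρ)
    (colIndep_empty c o η ρ)
    (fun I J hJ hIJ => colIndep_mono c o η ρ hJ hIJ)
    (fun I J hI hJ hIJ => colIndep_aug c o η ρ hI hJ hIJ)
    (fun I _ => Set.subset_univ I)).matroid✶

lemma twM_ground : (twM c o η ρ).E = Set.univ := rfl

lemma twM_base_iff (hfull :
      span ℂ (colc c o η ρ '' ((Finset.univ : Finset X.Edge) : Set X.Edge)) = ⊤)
    (B : Finset X.Edge) :
    (twM c o η ρ).IsBase ↑B ↔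
      (span ℂ (colc c o η ρ '' ((Bᶜ : Finset X.Edge) : Set X.Edge)) = ⊤ ∧
        (Bᶜ : Finset X.Edge).card = Nat.card {v : X.V // wQ c ρ v}) := by
  classical
  haveI : Fintype {v : X.V // wQ c ρ v} := Fintype.ofFinite _
  have hBE : (↑B : Set X.Edge) ⊆ Set.univ := Set.subset_univ _
  rw [twM, Matroid.dual_isBase_iff hBE]
  have hground : (IndepMatroid.ofFinite Set.finite_univ (colIndep c o η ρ)
      (colIndep_empty c o η ρ)
      (fun I J hJ hIJ => colIndep_mono c o η ρ hJ hIJ)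
      (fun I J hI hJ hIJ => colIndep_aug c o η ρ hI hJ hIJ)
      (fun I _ => Set.subset_univ I)).matroid.E = Set.univ := rfl
  have hdiff : (IndepMatroid.ofFinite Set.finite_univ (colIndep c o η ρ)
      (colIndep_empty c o η ρ)
      (fun I J hJ hIJ => colIndep_mono c o η ρ hJ hIJ)
      (fun I J hI hJ hIJ => colIndep_aug c o η ρ hI hJ hIJ)
      (fun I _ => Set.subset_univ I)).matroid.E \ ↑B = ((Bᶜ : Finset X.Edge) : Set X.Edge) := by
    rw [hground, ← Set.compl_eq_univ_diff, Finset.coe_compl]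
  rw [hdiff]
  rw [Matroid.isBase_iff_maximal_indep]
  have hindep : ∀ I : Set X.Edge, (IndepMatroid.ofFinite Set.finite_univ (colIndep c o η ρ)
      (colIndep_empty c o η ρ)
      (fun I J hJ hIJ => colIndep_mono c o η ρ hJ hIJ)
      (fun I J hI hJ hIJ => colIndep_aug c o η ρ hI hJ hIJ)
      (fun I _ => Set.subset_univ I)).matroid.Indep I ↔ colIndep c o η ρ I := by
    intro I
    rw [IndepMatroid.matroid_indep_iff, IndepMatroid.ofFinite_indep]
  set S : Set X.Edge := ((Bᶜ : Finset X.Edge) : Set X.Edge) with hS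
  have hScard : S.ncard = (Bᶜ : Finset X.Edge).card := Set.ncard_coe_finset _
  have hfin : finrank ℂ ({v : X.V // wQ c ρ v} → ℂ) = Nat.card {v : X.V // wQ c ρ v} := by
    rw [Module.finrank_pi, Nat.card_eq_fintype_card]
  constructor
  · rintro ⟨hind, hmax⟩
    rw [hindep] at hind
    have hspan : span ℂ (colc c o η ρ '' S) = ⊤ := by
      by_contra hsp
      have hex : ∃ e, colc c o η ρ e ∉ span ℂ (colc c o η ρ '' S) := by
        by_contra hc
        push_neg at hc
        apply hsp
        refine le_antisymm le_top ?_
        rw [← hfull, span_le]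
        rintro x ⟨e, _, rfl⟩
        exact hc e
      obtain ⟨e, he⟩ := hex
      have heS : e ∉ S := fun hc => he (subset_span (Set.mem_image_of_mem _ hc))
      have hins : colIndep c o η ρ (insert e S) := by
        change LinearIndepOn ℂ (colc c o η ρ) (insert e S)
        rw [linearIndepOn_insert heS]
        exact ⟨hind, he⟩
      have h2 := hmax ((hindep _).2 hins) (Set.subset_insert e S)
      exact heS (h2 (Set.mem_insert e S))
    refine ⟨hspan, ?_⟩
    have h1 := colIndep_ncard_le c o η ρ hind
    rw [hspan, finrank_top, hfin, hScard] at h1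
    exact h1
  · rintro ⟨hspan, hcard⟩
    haveI : Fintype S := Fintype.ofFinite _
    have hcardS : Fintype.card S = finrank ℂ ({v : X.V // wQ c ρ v} → ℂ) := by
      rw [hfin, ← hcard, ← hScard, (Nat.card_coe_set_eq _).symm, Nat.card_eq_fintype_card]
    have hind : colIndep c o η ρ S := by
      refine linearIndependent_of_top_le_span_of_card_eq_finrank ?_ hcardS
      rw [← Set.image_eq_range, hspan]
    refine ⟨(hindep _).2 hind, ?_⟩
    intro y hy hSy
    rw [hindep] at hy
    have hy' : y.ncard ≤ S.ncard := by
      haveI : Fintype y := Fintype.ofFinite _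
      have h1 := hy.fintype_card_le_finrank
      rw [hfin] at h1
      rw [(Nat.card_coe_set_eq (s := y)).symm, Nat.card_eq_fintype_card, hScard, ← hcard] at *
      omega
    have := Set.eq_of_subset_of_ncard_le hSy hy' (Set.toFinite _)
    rw [this]

end TwistedMatroid

end SerreGraph

namespace SerreGraph

open Submodule Module
open scoped Classical

section Projection

variable {X : SerreGraph}

/-- Coordinate projection onto the vertices of `C`. -/
noncomputable def projC (Wp : X.V → Prop) (C : Finset X.V) :
    ({v : X.V // Wp v} → ℂ) →ₗ[ℂ] ({v : X.V // Wp v} → ℂ) where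
  toFun x := fun w => if (w : X.V) ∈ C then x w else 0
  map_add' x y := by
    funext w
    by_cases h : (w : X.V) ∈ C <;> simp [h]
  map_smul' a x := by
    funext w
    by_cases h : (w : X.V) ∈ C <;> simp [h]

variable {Wp : X.V → Prop} {wt : X.H → ℂ}

lemma projC_vecg_mem {C : Finset X.V} {u : X.V} (hu : u ∈ C) :
    projC Wp C (X.vecg Wp u) = X.vecg Wp u := by
  funext w
  show (if (w : X.V) ∈ C then X.vecg Wp u w else 0) = X.vecg Wp u w
  by_cases h : (w : X.V) ∈ C
  · rw [if_pos h]
  · rw [if_neg h, vecg, if_neg]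
    intro hc
    exact h (hc ▸ hu)

lemma projC_vecg_not_mem {C : Finset X.V} {u : X.V} (hu : u ∉ C) :
    projC Wp C (X.vecg Wp u) = 0 := by
  funext w
  show (if (w : X.V) ∈ C then X.vecg Wp u w else 0) = 0
  by_cases h : (w : X.V) ∈ C
  · rw [if_pos h, vecg, if_neg]
    intro hc
    exact hu (hc ▸ h)
  · rw [if_neg h]

lemma projC_colg_mem (o : X.Orientation) {F : Finset X.Edge} {C : Finset X.V}
    (hC : C ∈ X.components F) {e : X.Edge} (he : e ∈ X.edgesIn F C) :
    projC Wp C (X.colg Wp wt o e) = X.colg Wp wt o e := by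
  have h1 : X.root (o.pick e) ∈ C :=
    X.root_mem_of_edgesIn hC he (o.pick_spec e)
  have h2 : X.root (X.inv (o.pick e)) ∈ C :=
    X.root_mem_of_edgesIn hC he (by rw [X.edgeOf_inv, o.pick_spec])
  rw [colg, psig, map_sub, map_smul, projC_vecg_mem h1, projC_vecg_mem h2]

lemma projC_colg_not_mem (o : X.Orientation) {F : Finset X.Edge} {C : Finset X.V}
    (hC : C ∈ X.components F) {e : X.Edge} (heF : e ∉ F) (he : e ∉ X.edgesIn F C) :
    projC Wp C (X.colg Wp wt o e) = 0 := by
  have hC' : X.compVerts F (X.root (o.pick e)) ∈ X.components F :=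
    X.mem_components.2 ⟨_, rfl⟩
  have he' : e ∈ X.edgesIn F (X.compVerts F (X.root (o.pick e))) :=
    X.mem_edgesIn_comp heF (o.pick_spec e)
  have hne : X.compVerts F (X.root (o.pick e)) ≠ C := by
    intro hc
    exact he (hc ▸ he')
  have hdisj := X.components_disjoint hC' hC hne
  have h1 : X.root (o.pick e) ∉ C :=
    fun hc => (Finset.disjoint_left.1 hdisj)
      (X.root_mem_of_edgesIn hC' he' (o.pick_spec e)) hc
  have h2 : X.root (X.inv (o.pick e)) ∉ C :=
    fun hc => (Finset.disjoint_left.1 hdisj)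
      (X.root_mem_of_edgesIn hC' he' (by rw [X.edgeOf_inv, o.pick_spec])) hc
  rw [colg, psig, map_sub, map_smul, projC_vecg_not_mem h1, projC_vecg_not_mem h2]
  simp

/-- Localization of a full span to the columns of a single component. -/
lemma vecg_mem_span_edgesIn (o : X.Orientation) {B : Finset X.Edge}
    (hsp : span ℂ (X.colg Wp wt o '' ((Bᶜ : Finset X.Edge) : Set X.Edge)) = ⊤)
    {C : Finset X.V} (hC : C ∈ X.components B) {u : X.V} (hu : u ∈ C) :
    X.vecg Wp u ∈ span ℂ (X.colg Wp wt o '' ((X.edgesIn B C : Finset X.Edge) : Set X.Edge)) := by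
  have h0 : X.vecg Wp u ∈ span ℂ (X.colg Wp wt o '' ((Bᶜ : Finset X.Edge) : Set X.Edge)) := by
    rw [hsp]; exact Submodule.mem_top
  have h1 : projC Wp C (X.vecg Wp u) ∈
      Submodule.map (projC (X := X) Wp C) (span ℂ (X.colg Wp wt o '' ((Bᶜ : Finset X.Edge) : Set X.Edge))) :=
    Submodule.mem_map_of_mem h0
  rw [Submodule.map_span] at h1
  rw [projC_vecg_mem hu] at h1
  refine (span_le.2 ?_) h1
  rintro x ⟨y, ⟨e, he, rfl⟩, rfl⟩
  have heF : e ∉ B := Finset.mem_compl.1 he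
  by_cases hein : e ∈ X.edgesIn B C
  · rw [projC_colg_mem o hC hein]
    exact subset_span (Set.mem_image_of_mem _ hein)
  · rw [projC_colg_not_mem o hC heF hein]
    exact Submodule.zero_mem _

/-- A connected component has at least `|C| - 1` edges. -/
lemma card_comp_le_edges (o : X.Orientation) {B : Finset X.Edge} {C : Finset X.V}
    (hC : C ∈ X.components B) : C.card ≤ (X.edgesIn B C).card + 1 := by
  obtain ⟨vr, rfl⟩ := X.mem_components.1 hC
  set C := X.compVerts B vr with hCdef
  have hall : ∀ u ∈ C.erase vr,
      X.vecg (fun v => v ≠ vr) u ∈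
        span ℂ (X.colg (fun v => v ≠ vr) (fun _ => (1 : ℂ)) o ''
          ((X.edgesIn B C : Finset X.Edge) : Set X.Edge)) := by
    intro u hu
    have huC : u ∈ C := Finset.mem_of_mem_erase hu
    have hrel : X.compRel B u vr := X.compRel_symm (X.mem_compVerts.1 huC)
    obtain ⟨l, hw, hl⟩ := walk_of_compRel hrel
    refine vecg_mem_span_of_walk o (fun h => by norm_num) hw ?_ ?_
    · intro h hh
      refine X.mem_edgesIn.2 ⟨hl h hh, h, rfl, ?_⟩
      have h1 : X.compRel B u (X.root h) := hw.root_mem hl hh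
      exact X.mem_compVerts.2 (X.compRel_trans (X.mem_compVerts.1 huC) h1)
    · rw [vecg_eq_zero (by simp)]
      exact Submodule.zero_mem _
  have hcard := card_le_of_vecg_mem_span o (C.erase vr) (fun u hu => Finset.ne_of_mem_erase hu)
    (X.edgesIn B C) hall
  have hvr : vr ∈ C := X.self_mem_compVerts B vr
  have := Finset.card_erase_add_one hvr
  omega

end Projection

end SerreGraph

namespace SerreGraph

open Submodule Module
open scoped Classical

section MainEquiv

variable {G : Type} [CommGroup G] [Fintype G] {Xt X : SerreGraph}
variable (c : GCover G Xt X) (o : X.Orientation) (η : X.Edge → G) (ρ : G →* ℂ)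

/-- The component condition characterizing bases of the twisted matroid. -/
def compGood (B : Finset X.Edge) (C : Finset X.V) : Prop :=
  ((X.edgesIn B C).card = C.card ∧
    (∀ v ∈ C, ∀ g ∈ c.dilation v, ρ g = 1) ∧
    (∀ l : List X.H, X.IsEdgeCycle (X.edgesIn B C) l →
      ρ (X.pathVoltage o η l) ≠ 1)) ∨
  ((X.edgesIn B C).card + 1 = C.card ∧
    ∃! v : X.V, v ∈ C ∧ ∃ g ∈ c.dilation v, ρ g ≠ 1)

lemma natCard_wQ :
    Nat.card {v : X.V // wQ c ρ v} = (Finset.univ.filter (wQ c ρ)).card := by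
  haveI : Fintype {v : X.V // wQ c ρ v} := Fintype.ofFinite _
  rw [Nat.card_eq_fintype_card]
  convert Fintype.card_subtype (p := wQ c ρ)

lemma inter_filter_univ (C : Finset X.V) :
    C ∩ Finset.univ.filter (wQ c ρ) = C.filter (wQ c ρ) := by
  ext v
  simp [Finset.mem_filter, Finset.mem_inter]

lemma sum_filter_card (B : Finset X.Edge) :
    ∑ C ∈ X.components B, (C.filter (wQ c ρ)).card =
      (Finset.univ.filter (wQ c ρ)).card := by
  rw [← X.sum_card_inter B (Finset.univ.filter (wQ c ρ))]
  exact Finset.sum_congr rfl (fun C _ => by rw [inter_filter_univ])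

lemma base_forward (B : Finset X.Edge)
    (hsp : span ℂ (colc c o η ρ '' ((Bᶜ : Finset X.Edge) : Set X.Edge)) = ⊤)
    (hcard : (Bᶜ : Finset X.Edge).card = Nat.card {v : X.V // wQ c ρ v}) :
    ∀ C ∈ X.components B, compGood c o η ρ B C := by
  have hpt : ∀ C ∈ X.components B,
      (C.filter (wQ c ρ)).card ≤ (X.edgesIn B C).card := by
    intro C hC
    refine card_le_of_vecg_mem_span (wt := wtc o η ρ) o (C.filter (wQ c ρ))
      (fun u hu => (Finset.mem_filter.1 hu).2) (X.edgesIn B C) ?_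
    intro u hu
    exact vecg_mem_span_edgesIn o hsp hC (Finset.mem_filter.1 hu).1
  have hsum : ∑ C ∈ X.components B, (C.filter (wQ c ρ)).card =
      ∑ C ∈ X.components B, (X.edgesIn B C).card := by
    rw [sum_filter_card c ρ B, X.sum_card_edgesIn B, hcard, natCard_wQ c ρ]
  have heq := (Finset.sum_eq_sum_iff_of_le hpt).1 hsum
  intro C hC
  have heqC : (C.filter (wQ c ρ)).card = (X.edgesIn B C).card := heq C hC
  have hsplit := Finset.card_filter_add_card_filter_not
    (s := C) (p := wQ c ρ)
  have hb := card_comp_le_edges o hC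
  have hCpos : 0 < C.card := Finset.card_pos.2 (X.components_nonempty hC)
  have hd : (C.filter (fun v => ¬ wQ c ρ v)).card ≤ 1 := by omega
  rcases Nat.le_one_iff_eq_zero_or_eq_one.1 hd with hd0 | hd1
  · -- no dilated vertex in the component : genus-one case
    have hwall : ∀ v ∈ C, wQ c ρ v := by
      intro v hv
      by_contra hnv
      have : v ∈ C.filter (fun v => ¬ wQ c ρ v) := Finset.mem_filter.2 ⟨hv, hnv⟩
      rw [Finset.card_eq_zero.1 hd0] at this
      simp at this
    have hfC : C.filter (wQ c ρ) = C := Finset.filter_true_of_mem hwall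
    have hcC : (X.edgesIn B C).card = C.card := by
      rw [← heqC, hfC]
    refine Or.inl ⟨hcC, ?_, ?_⟩
    · intro v hv g hg
      by_contra hne
      exact hwall v hv ⟨g, hg, hne⟩
    · intro l hcyc
      intro h1
      have hprod : (l.map (wtc o η ρ)).prod = 1 := by
        rw [prod_map_wt o η ρ l, h1]
      obtain ⟨e₀, he₀, hle⟩ := span_le_erase_of_cycle (Wp := wQ c ρ) o
        (hwtc o η ρ) hcyc.1 hprod hcyc.2.2 hcyc.2.1
      have hall2 : ∀ u ∈ C, X.vecg (wQ c ρ) u ∈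
          span ℂ (X.colg (wQ c ρ) (wtc o η ρ) o ''
            (((X.edgesIn B C).erase e₀ : Finset X.Edge) : Set X.Edge)) := by
        intro u hu
        exact hle (vecg_mem_span_edgesIn o hsp hC hu)
      have hcle := card_le_of_vecg_mem_span (wt := wtc o η ρ) o C hwall ((X.edgesIn B C).erase e₀) hall2
      have := Finset.card_erase_of_mem he₀
      omega
  · -- exactly one dilated vertex : tree case
    refine Or.inr ⟨by omega, ?_⟩
    obtain ⟨a, ha⟩ := Finset.card_eq_one.1 hd1
    have haf : a ∈ C.filter (fun v => ¬ wQ c ρ v) := by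
      rw [ha]; exact Finset.mem_singleton_self a
    have haC : a ∈ C := (Finset.mem_filter.1 haf).1
    have haD : ∃ g ∈ c.dilation a, ρ g ≠ 1 :=
      not_not.1 (Finset.mem_filter.1 haf).2
    refine ⟨a, ⟨haC, haD⟩, ?_⟩
    rintro v ⟨hvC, hvD⟩
    have : v ∈ C.filter (fun v => ¬ wQ c ρ v) :=
      Finset.mem_filter.2 ⟨hvC, fun hw => hw hvD⟩
    rw [ha] at this
    exact Finset.mem_singleton.1 this

lemma card_filter_eq_of_good {B : Finset X.Edge} {C : Finset X.V}
    (hgood : compGood c o η ρ B C) :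
    (X.edgesIn B C).card = (C.filter (wQ c ρ)).card := by
  rcases hgood with ⟨h1, h2, _⟩ | ⟨h1, v, ⟨hvC, hvD⟩, huniq⟩
  · have hfC : C.filter (wQ c ρ) = C := by
      refine Finset.filter_true_of_mem ?_
      rintro v hv ⟨g, hg, hne⟩
      exact hne (h2 v hv g hg)
    rw [hfC, h1]
  · have hneg : C.filter (fun v => ¬ wQ c ρ v) = {v} := by
      ext v'
      simp only [Finset.mem_filter, Finset.mem_singleton]
      constructor
      · rintro ⟨hv'C, hnw⟩
        exact huniq v' ⟨hv'C, not_not.1 hnw⟩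
      · rintro rfl
        exact ⟨hvC, fun hw => hw hvD⟩
    have hsplit := Finset.card_filter_add_card_filter_not
      (s := C) (p := wQ c ρ)
    rw [hneg, Finset.card_singleton] at hsplit
    omega

lemma base_backward (B : Finset X.Edge)
    (hgood : ∀ C ∈ X.components B, compGood c o η ρ B C) :
    span ℂ (colc c o η ρ '' ((Bᶜ : Finset X.Edge) : Set X.Edge)) = ⊤ ∧
      (Bᶜ : Finset X.Edge).card = Nat.card {v : X.V // wQ c ρ v} := by
  constructor
  · refine span_eq_top_of_vecg ?_
    intro u hu
    have hC : X.compVerts B u ∈ X.components B := X.mem_components.2 ⟨u, rfl⟩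
    have huC : u ∈ X.compVerts B u := X.self_mem_compVerts B u
    rcases hgood _ hC with ⟨hc1, hdilC, hcycC⟩ | ⟨hc2, v, ⟨hvC, hvD⟩, _⟩
    · obtain ⟨l, hl⟩ := exists_cycle_of_card_le hC (le_of_eq hc1.symm)
      have hne1 := hcycC l hl
      have hw := walk_of_closedPath hl.1
      have htel := walk_telescope (Wp := wQ c ρ) (wt := wtc o η ρ) hw
      have hlee : span ℂ (X.psig (wQ c ρ) (wtc o η ρ) '' {h | h ∈ l}) ≤
          span ℂ (colc c o η ρ '' ((Bᶜ : Finset X.Edge) : Set X.Edge)) := by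
        rw [span_le]
        rintro x ⟨h, hh, rfl⟩
        refine psig_mem_span o (hwtc o η ρ) ?_
        exact Finset.mem_compl.2 (X.mem_edgesIn.1 (hl.2.1 h hh)).1
      have h1 : (1 - ρ (X.pathVoltage o η l)) • X.vecg (wQ c ρ) (X.root (l.head hl.1.1)) ∈
          span ℂ (colc c o η ρ '' ((Bᶜ : Finset X.Edge) : Set X.Edge)) := by
        have := hlee htel
        rw [prod_map_wt o η ρ l] at this
        rwa [sub_smul, one_smul]
      have h2 : X.vecg (wQ c ρ) (X.root (l.head hl.1.1)) ∈
          span ℂ (colc c o η ρ '' ((Bᶜ : Finset X.Edge) : Set X.Edge)) :=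
        (Submodule.smul_mem_iff _ (sub_ne_zero.2 (fun hc => hne1 hc.symm))).1 h1
      have hu₀C : X.root (l.head hl.1.1) ∈ X.compVerts B u :=
        X.root_mem_of_edgesIn hC (hl.2.1 _ (List.head_mem hl.1.1)) rfl
      obtain ⟨l', hw', hl'⟩ := walk_of_compRel (X.mem_compVerts.1 hu₀C)
      exact vecg_mem_span_of_walk o (hwtc o η ρ) hw'
        (fun h hh => Finset.mem_compl.2 (hl' h hh)) h2
    · obtain ⟨l', hw', hl'⟩ := walk_of_compRel (X.mem_compVerts.1 hvC)
      refine vecg_mem_span_of_walk o (hwtc o η ρ) hw'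
        (fun h hh => Finset.mem_compl.2 (hl' h hh)) ?_
      rw [vecg_eq_zero (fun hw => hw hvD)]
      exact Submodule.zero_mem _
  · rw [← X.sum_card_edgesIn B, natCard_wQ c ρ, ← sum_filter_card c ρ B]
    exact Finset.sum_congr rfl (fun C hC => card_filter_eq_of_good c o η ρ (hgood C hC))

end MainEquiv

end SerreGraph


open SerreGraph in
/-- **Proposition.** Let `p : X̃ → X` be a connected harmonic `G`-cover with abelian Galois
group `G`, defined by a dilated `G`-voltage assignment `η`, and let `ρ : G → ℂ*` be a
nontrivial character. There exists a matroid `M*(X̃/X, ρ)` on ground set `E(X)` of rank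
`g(X) - 1 + |{v : ρ(D(v)) ≠ {1}}|` whose bases `B` are characterized by: every connected
component `C` of `X ∖ B` is exactly one of (1) a genus-one graph with `ρ(D(v)) = {1}` for
all its vertices and `ρ(η(C)) ≠ 1` along its unique cycle; (2) a tree with a unique vertex
`v` such that `ρ(D(v)) ≠ {1}`. -/
theorem exists_twisted_matroid
    (G : Type) [CommGroup G] [Fintype G] (X Xt : SerreGraph)
    (hX : X.Connected) (hXt : Xt.Connected) (c : GCover G Xt X)
    (o : X.Orientation) (σ : X.V → Xt.V) (η : X.Edge → G)
    (hrep : c.IsVoltageRep o σ η)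
    (ρ : G →* ℂ) (hρ : ρ ≠ 1) :
    ∃ M : Matroid X.Edge, M.E = Set.univ ∧
      (∀ B : Finset X.Edge, M.IsBase ↑B ↔ ∀ C ∈ X.components B,
        ((X.edgesIn B C).card = C.card ∧
          (∀ v ∈ C, ∀ g ∈ c.dilation v, ρ g = 1) ∧
          (∀ l : List X.H, X.IsEdgeCycle (X.edgesIn B C) l →
            ρ (X.pathVoltage o η l) ≠ 1)) ∨
        ((X.edgesIn B C).card + 1 = C.card ∧
          ∃! v : X.V, v ∈ C ∧ ∃ g ∈ c.dilation v, ρ g ≠ 1)) ∧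
      (∀ B : Finset X.Edge, M.IsBase ↑B →
        B.card + Fintype.card X.V =
          Fintype.card X.Edge + Set.ncard {v : X.V | ∃ g ∈ c.dilation v, ρ g ≠ 1}) := by
  classical
  have hfull := SerreGraph.span_colc_top c o η ρ hX hXt σ hrep hρ
  refine ⟨SerreGraph.twM c o η ρ, rfl, ?_, ?_⟩
  · intro B
    rw [SerreGraph.twM_base_iff c o η ρ hfull B]
    constructor
    · rintro ⟨hsp, hcard⟩
      intro C hC
      exact SerreGraph.base_forward c o η ρ B hsp hcard C hC
    · intro hgood
      exact SerreGraph.base_backward c o η ρ B (fun C hC => hgood C hC)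
  · intro B hB
    rw [SerreGraph.twM_base_iff c o η ρ hfull B] at hB
    have h1 : B.card + Bᶜ.card = Fintype.card X.Edge := Finset.card_add_card_compl B
    have h2 : Nat.card {v : X.V // SerreGraph.wQ c ρ v} =
        (Finset.univ.filter (SerreGraph.wQ c ρ)).card := SerreGraph.natCard_wQ c ρ
    have h3 : (Finset.univ.filter (SerreGraph.wQ c ρ)).card +
        (Finset.univ.filter (fun v => ¬ SerreGraph.wQ c ρ v)).card = Fintype.card X.V := by
      have := Finset.card_filter_add_card_filter_not
        (s := (Finset.univ : Finset X.V)) (p := SerreGraph.wQ c ρ)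
      simpa using this
    have h4 : Set.ncard {v : X.V | ∃ g ∈ c.dilation v, ρ g ≠ 1} =
        (Finset.univ.filter (fun v => ¬ SerreGraph.wQ c ρ v)).card := by
      have hset : {v : X.V | ∃ g ∈ c.dilation v, ρ g ≠ 1} =
          ↑(Finset.univ.filter (fun v => ¬ SerreGraph.wQ c ρ v)) := by
        ext v
        simp [SerreGraph.wQ]
      rw [hset, Set.ncard_coe_finset]
    have h5 := hB.2
    omega
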